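/- arXiv:2401.00838 — 16 statements merged into one kernel-verified Lean document; each statement's English description precedes it below -/
import Mathlib

section
/- For all V, V₁, V₂ ∈ 𝔳, one has ⟨[V, V₁], [V, V₂]⟩ = ‖V‖²·⟨P_V(V₁), P_V(V₂)⟩. -/
open RealInnerProductSpace

/-- For all `V, V₁, V₂ ∈ 𝔳`, one has `⟨[V,V₁],[V,V₂]⟩ = ‖V‖² ⟨P_V V₁, P_V V₂⟩`, where
`P_V` is the orthogonal projection of `𝔳` onto the subspace `J_𝔷V = {J_z V : z ∈ 𝔷}`. -/
theorem stmt_1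
    {𝕍 𝕫 : Type*} [NormedAddCommGroup 𝕍] [InnerProductSpace ℝ 𝕍] [FiniteDimensional ℝ 𝕍]
    [NormedAddCommGroup 𝕫] [InnerProductSpace ℝ 𝕫] [FiniteDimensional ℝ 𝕫]
    (J : 𝕫 →ₗ[ℝ] 𝕍 →ₗ[ℝ] 𝕍)
    (hJsq : ∀ (z : 𝕫) (v : 𝕍), J z (J z v) = -(‖z‖ ^ 2) • v)
    (hJnorm : ∀ (z : 𝕫) (v : 𝕍), ‖J z v‖ = ‖z‖ * ‖v‖)
    (br : 𝕍 →ₗ[ℝ] 𝕍 →ₗ[ℝ] 𝕫)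
    (hbr : ∀ (U V : 𝕍) (Z : 𝕫), ⟪br U V, Z⟫ = ⟪J Z U, V⟫)
    (V V₁ V₂ : 𝕍) :
    ⟪br V V₁, br V V₂⟫ =
      ‖V‖ ^ 2 * ⟪(Submodule.orthogonalProjectionOnto (LinearMap.range (J.flip V)) V₁ : 𝕍),
                 (Submodule.orthogonalProjectionOnto (LinearMap.range (J.flip V)) V₂ : 𝕍)⟫ := by
  set T : 𝕫 →ₗ[ℝ] 𝕍 := J.flip V with hT
  have hTapp : ∀ z : 𝕫, T z = J z V := fun z => rfl
  -- polarization identity: ⟪T z, T z'⟫ = ‖V‖² ⟪z, z'⟫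
  have hTT : ∀ z z' : 𝕫, ⟪T z, T z'⟫ = ‖V‖ ^ 2 * ⟪z, z'⟫ := by
    intro z z'
    have hA : ‖T z + T z'‖ ^ 2 = ‖T z‖ ^ 2 + 2 * ⟪T z, T z'⟫ + ‖T z'‖ ^ 2 :=
      norm_add_sq_real _ _
    have hB : ‖z + z'‖ ^ 2 = ‖z‖ ^ 2 + 2 * ⟪z, z'⟫ + ‖z'‖ ^ 2 :=
      norm_add_sq_real _ _
    have e : T (z + z') = T z + T z' := map_add T z z'
    have h3 : ‖T z + T z'‖ ^ 2 = (‖z + z'‖ * ‖V‖) ^ 2 := by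
      rw [← e, hTapp, hJnorm]
    have h4 : ‖T z‖ ^ 2 = (‖z‖ * ‖V‖) ^ 2 := by rw [hTapp, hJnorm]
    have h5 : ‖T z'‖ ^ 2 = (‖z'‖ * ‖V‖) ^ 2 := by rw [hTapp, hJnorm]
    nlinarith [hA, hB, h3, h4, h5]
  have hbrT : ∀ (W : 𝕍) (z : 𝕫), ⟪br V W, z⟫ = ⟪T z, W⟫ := fun W z => hbr V W z
  set S := LinearMap.range T with hS
  -- the projections are in the range of T
  obtain ⟨z₁, hz₁⟩ := (Submodule.orthogonalProjectionOnto S V₁).2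
  obtain ⟨z₂, hz₂⟩ := (Submodule.orthogonalProjectionOnto S V₂).2
  -- br V W = ‖V‖² • z  when  orthogonalProjection S W = T z
  have key : ∀ (W : 𝕍) (zw : 𝕫), T zw = (Submodule.orthogonalProjectionOnto S W : 𝕍) →
      br V W = ‖V‖ ^ 2 • zw := by
    intro W zw hzw
    apply ext_inner_right ℝ
    intro z
    have horth := Submodule.sub_starProjection_mem_orthogonal (K := S) W
    have h0 : ⟪T z, W - (Submodule.orthogonalProjectionOnto S W : 𝕍)⟫ = 0 :=
      (Submodule.mem_orthogonal S _).1 horth (T z) ⟨z, rfl⟩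
    have : ⟪T z, W⟫ = ⟪T z, (Submodule.orthogonalProjectionOnto S W : 𝕍)⟫ := by
      have := inner_sub_right (𝕜 := ℝ) (T z) W ((Submodule.orthogonalProjectionOnto S W : 𝕍))
      linarith [h0, this]
    rw [hbrT, this, ← hzw, hTT, real_inner_smul_left]
    rw [real_inner_comm]
  have e₁ : br V V₁ = ‖V‖ ^ 2 • z₁ := key V₁ z₁ hz₁
  have e₂ : br V V₂ = ‖V‖ ^ 2 • z₂ := key V₂ z₂ hz₂
  rw [e₁, e₂, ← hz₁, ← hz₂, hTT, real_inner_smul_left, real_inner_smul_right]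
end

section
/- For all V, V₁ ∈ 𝔳, one has J_{[V,V₁]}(V) = ‖V‖²·P_V(V₁). -/
open RealInnerProductSpace

/-- For all `V, V₁ ∈ 𝔳`, one has `J_{[V,V₁]} V = ‖V‖² • P_V V₁`, where `P_V` is the
orthogonal projection of `𝔳` onto the subspace `J_𝔷V = {J_z V : z ∈ 𝔷}`. -/
theorem stmt_2
    {𝕍 𝕫 : Type*} [NormedAddCommGroup 𝕍] [InnerProductSpace ℝ 𝕍] [FiniteDimensional ℝ 𝕍]
    [NormedAddCommGroup 𝕫] [InnerProductSpace ℝ 𝕫] [FiniteDimensional ℝ 𝕫]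
    (J : 𝕫 →ₗ[ℝ] 𝕍 →ₗ[ℝ] 𝕍)
    (hJsq : ∀ (z : 𝕫) (v : 𝕍), J z (J z v) = -(‖z‖ ^ 2) • v)
    (hJnorm : ∀ (z : 𝕫) (v : 𝕍), ‖J z v‖ = ‖z‖ * ‖v‖)
    (br : 𝕍 →ₗ[ℝ] 𝕍 →ₗ[ℝ] 𝕫)
    (hbr : ∀ (U V : 𝕍) (Z : 𝕫), ⟪br U V, Z⟫ = ⟪J Z U, V⟫)
    (V V₁ : 𝕍) :
    J (br V V₁) V =
      ‖V‖ ^ 2 • ((LinearMap.range (J.flip V)).orthogonalProjection V₁ : 𝕍) := by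
  set S := LinearMap.range (J.flip V) with hS
  -- polarization: ⟪J z V, J w V⟫ = ⟪z, w⟫ * ‖V‖²
  have key : ∀ z w : 𝕫, ⟪J z V, J w V⟫ = ⟪z, w⟫ * ‖V‖ ^ 2 := by
    intro z w
    have e : J (z + w) V = J z V + J w V := by
      simp [map_add, LinearMap.add_apply]
    have e1 : ‖J z V + J w V‖ ^ 2 = ‖z + w‖ ^ 2 * ‖V‖ ^ 2 := by
      rw [← e, hJnorm, mul_pow]
    rw [norm_add_sq_real, norm_add_sq_real, hJnorm, hJnorm, mul_pow, mul_pow] at e1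
    nlinarith [e1]
  -- bracket with orthogonal part vanishes
  have hq : ∀ q : 𝕍, q ∈ Sᗮ → br V q = 0 := by
    intro q hqm
    refine ext_inner_right ℝ fun z => ?_
    rw [hbr]
    have hmem : J z V ∈ S := ⟨z, rfl⟩
    have h0 : ⟪J z V, q⟫ = 0 :=
      (Submodule.mem_orthogonal S q).mp hqm (J z V) hmem
    simp [h0]
  have hp : ∀ z₀ : 𝕫, br V (J z₀ V) = (‖V‖ ^ 2) • z₀ := by
    intro z₀
    refine ext_inner_right ℝ fun z => ?_
    rw [hbr, key, real_inner_smul_left, real_inner_comm]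
    ring
  set p : 𝕍 := (S.orthogonalProjection V₁ : 𝕍) with hpdef
  obtain ⟨z₀, hz₀⟩ : p ∈ S := SetLike.coe_mem _
  have hz₀' : J z₀ V = p := hz₀
  have hqmem : V₁ - p ∈ Sᗮ := S.sub_starProjection_mem_orthogonal V₁
  have hsplit : br V V₁ = br V p + br V (V₁ - p) := by
    rw [← map_add]; congr 1; abel
  rw [hsplit, hq _ hqmem, add_zero, ← hz₀', hp, map_smul, LinearMap.smul_apply, hz₀']
end

section
/- If (E₁, …, E_n) is an orthonormal basis of 𝔳 and m = dim 𝔷, then for all V, W ∈ 𝔳 one has Σ_{i=1}^n ⟨[E_i, V], [E_i, W]⟩ = m·⟨V, W⟩. -/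
open RealInnerProductSpace

lemma aux_isom {𝕍 𝕫 : Type*} [NormedAddCommGroup 𝕍] [InnerProductSpace ℝ 𝕍]
    [NormedAddCommGroup 𝕫] [InnerProductSpace ℝ 𝕫]
    (J : 𝕫 →ₗ[ℝ] 𝕍 →ₗ[ℝ] 𝕍)
    (hJnorm : ∀ (z : 𝕫) (v : 𝕍), ‖J z v‖ = ‖z‖ * ‖v‖)
    (z : 𝕫) (v w : 𝕍) : ⟪J z v, J z w⟫ = ‖z‖ ^ 2 * ⟪v, w⟫ := by
  have h : ∀ u u' : 𝕍, ⟪u, u'⟫ = (‖u + u'‖ ^ 2 - ‖u‖ ^ 2 - ‖u'‖ ^ 2) / 2 := by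
    intro u u'
    rw [@norm_add_sq_real]; ring
  rw [h (J z v) (J z w), h v w, ← map_add (J z), hJnorm, hJnorm, hJnorm]
  ring

lemma aux_skew {𝕍 𝕫 : Type*} [NormedAddCommGroup 𝕍] [InnerProductSpace ℝ 𝕍]
    [NormedAddCommGroup 𝕫] [InnerProductSpace ℝ 𝕫]
    (J : 𝕫 →ₗ[ℝ] 𝕍 →ₗ[ℝ] 𝕍)
    (hJsq : ∀ (z : 𝕫) (v : 𝕍), J z (J z v) = -(‖z‖ ^ 2) • v)
    (hJnorm : ∀ (z : 𝕫) (v : 𝕍), ‖J z v‖ = ‖z‖ * ‖v‖)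
    (z : 𝕫) (v w : 𝕍) : ⟪J z v, w⟫ = -⟪v, J z w⟫ := by
  rcases eq_or_ne z 0 with rfl | hz
  · simp
  · have hz2 : ‖z‖ ^ 2 ≠ 0 := pow_ne_zero 2 (norm_ne_zero_iff.mpr hz)
    have hw : w = (-(‖z‖ ^ 2))⁻¹ • J z (J z w) := by
      rw [hJsq]; rw [smul_smul]; field_simp; rw [one_smul]
    calc ⟪J z v, w⟫ = (-(‖z‖ ^ 2))⁻¹ * ⟪J z v, J z (J z w)⟫ := by
          conv_lhs => rw [hw]
          rw [real_inner_smul_right]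
      _ = (-(‖z‖ ^ 2))⁻¹ * (‖z‖ ^ 2 * ⟪v, J z w⟫) := by rw [aux_isom J hJnorm]
      _ = -⟪v, J z w⟫ := by
          rw [inv_neg, neg_mul, ← mul_assoc, inv_mul_cancel₀ hz2, one_mul]

/-- If `(E₁, …, E_n)` is an orthonormal basis of `𝔳` and `m = dim 𝔷`, then for all
`V, W ∈ 𝔳` one has `∑ i, ⟨[E i, V], [E i, W]⟩ = m ⟨V, W⟩`. -/
theorem stmt_3
    {𝕍 𝕫 : Type*} [NormedAddCommGroup 𝕍] [InnerProductSpace ℝ 𝕍] [FiniteDimensional ℝ 𝕍]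
    [NormedAddCommGroup 𝕫] [InnerProductSpace ℝ 𝕫] [FiniteDimensional ℝ 𝕫]
    (J : 𝕫 →ₗ[ℝ] 𝕍 →ₗ[ℝ] 𝕍)
    (hJsq : ∀ (z : 𝕫) (v : 𝕍), J z (J z v) = -(‖z‖ ^ 2) • v)
    (hJnorm : ∀ (z : 𝕫) (v : 𝕍), ‖J z v‖ = ‖z‖ * ‖v‖)
    (br : 𝕍 →ₗ[ℝ] 𝕍 →ₗ[ℝ] 𝕫)
    (hbr : ∀ (U V : 𝕍) (Z : 𝕫), ⟪br U V, Z⟫ = ⟪J Z U, V⟫)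
    (n : ℕ) (E : OrthonormalBasis (Fin n) ℝ 𝕍)
    (m : ℕ) (hm : m = Module.finrank ℝ 𝕫)
    (V W : 𝕍) :
    ∑ i : Fin n, ⟪br (E i) V, br (E i) W⟫ = (m : ℝ) * ⟪V, W⟫ := by
  set F := stdOrthonormalBasis ℝ 𝕫
  have key : ∀ i : Fin n, ⟪br (E i) V, br (E i) W⟫
      = ∑ k, ⟪E i, J (F k) V⟫ * ⟪E i, J (F k) W⟫ := by
    intro i
    rw [← F.sum_inner_mul_inner (br (E i) V) (br (E i) W)]
    refine Finset.sum_congr rfl fun k _ => ?_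
    have h1 : ⟪br (E i) V, F k⟫ = -⟪E i, J (F k) V⟫ := by
      rw [hbr, aux_skew J hJsq hJnorm]
    have h2 : ⟪F k, br (E i) W⟫ = -⟪E i, J (F k) W⟫ := by
      rw [real_inner_comm, hbr, aux_skew J hJsq hJnorm]
    rw [h1, h2]; ring
  calc ∑ i : Fin n, ⟪br (E i) V, br (E i) W⟫
      = ∑ k, ∑ i : Fin n, ⟪E i, J (F k) V⟫ * ⟪E i, J (F k) W⟫ := by
        rw [Finset.sum_comm]; exact Finset.sum_congr rfl fun i _ => key i
    _ = ∑ k, ⟪J (F k) V, J (F k) W⟫ := by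
        refine Finset.sum_congr rfl fun k _ => ?_
        have := E.sum_inner_mul_inner (J (F k) V) (J (F k) W)
        rw [← this]
        refine Finset.sum_congr rfl fun i _ => ?_
        rw [real_inner_comm (J (F k) V) (E i)]
    _ = (m : ℝ) * ⟪V, W⟫ := by
        have : ∀ k, ⟪J (F k) V, J (F k) W⟫ = ⟪V, W⟫ := by
          intro k
          rw [aux_isom J hJnorm, F.orthonormal.1 k]
          simp
        simp only [this, Finset.sum_const, Finset.card_univ, Fintype.card_fin, hm,
          nsmul_eq_mul]
end

section
/- A vector v ∈ 𝔳 satisfies the J²-condition if and only if the subspace ℝv + J_𝔷v of 𝔳 is invariant under J_z for every z ∈ 𝔷 (equivalently, the Clifford submodule of 𝔳 generated by v, i.e. the smallest subspace containing v that is invariant under all J_z, equals ℝv ⊕ J_𝔷v). -/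
open RealInnerProductSpace

/-- A vector `v ∈ 𝔳` satisfies the `J²`-condition iff the subspace `ℝv + J_𝔷v` of `𝔳`
is invariant under `J_z` for every `z ∈ 𝔷` (i.e. the Clifford submodule generated by `v`
equals `ℝv ⊕ J_𝔷v`). -/
theorem stmt_4
    {𝕍 𝕫 : Type*} [NormedAddCommGroup 𝕍] [InnerProductSpace ℝ 𝕍] [FiniteDimensional ℝ 𝕍]
    [NormedAddCommGroup 𝕫] [InnerProductSpace ℝ 𝕫] [FiniteDimensional ℝ 𝕫]
    (J : 𝕫 →ₗ[ℝ] 𝕍 →ₗ[ℝ] 𝕍)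
    (hJsq : ∀ (z : 𝕫) (v : 𝕍), J z (J z v) = -(‖z‖ ^ 2) • v)
    (hJnorm : ∀ (z : 𝕫) (v : 𝕍), ‖J z v‖ = ‖z‖ * ‖v‖)
    (br : 𝕍 →ₗ[ℝ] 𝕍 →ₗ[ℝ] 𝕫)
    (hbr : ∀ (U V : 𝕍) (Z : 𝕫), ⟪br U V, Z⟫ = ⟪J Z U, V⟫)
    (v : 𝕍) :
    (∀ z₁ z₂ : 𝕫, ⟪z₁, z₂⟫ = 0 → ∃ z₃ : 𝕫, J z₁ (J z₂ v) = J z₃ v) ↔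
      (∀ z : 𝕫, Submodule.map (J z) ((ℝ ∙ v) ⊔ LinearMap.range (J.flip v)) ≤
        (ℝ ∙ v) ⊔ LinearMap.range (J.flip v)) := by
  -- Basic quadratic identities
  have key : ∀ (z : 𝕫) (u : 𝕍), ⟪J z u, J z u⟫ = ⟪z, z⟫ * ‖u‖ ^ 2 := by
    intro z u
    rw [real_inner_self_eq_norm_sq, real_inner_self_eq_norm_sq, hJnorm, mul_pow]
  have hA : ∀ (z₁ z₂ : 𝕫) (u : 𝕍), ⟪J z₁ u, J z₂ u⟫ = ⟪z₁, z₂⟫ * ‖u‖ ^ 2 := by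
    intro z₁ z₂ u
    have h12 := key (z₁ + z₂) u
    rw [map_add, LinearMap.add_apply, real_inner_add_add_self,
      real_inner_add_add_self] at h12
    have k1 := key z₁ u
    have k2 := key z₂ u
    linear_combination (h12 - k1 - k2) / 2
  have key2 : ∀ (z : 𝕫) (u : 𝕍), ⟪J z u, J z u⟫ = ‖z‖ ^ 2 * ⟪u, u⟫ := by
    intro z u
    rw [real_inner_self_eq_norm_sq, real_inner_self_eq_norm_sq, hJnorm, mul_pow]
  have hA' : ∀ (z : 𝕫) (u w : 𝕍), ⟪J z u, J z w⟫ = ‖z‖ ^ 2 * ⟪u, w⟫ := by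
    intro z u w
    have h12 := key2 z (u + w)
    rw [map_add, real_inner_add_add_self, real_inner_add_add_self] at h12
    have k1 := key2 z u
    have k2 := key2 z w
    linear_combination (h12 - k1 - k2) / 2
  have hskew : ∀ (z : 𝕫) (u w : 𝕍), ⟪J z u, w⟫ = -⟪u, J z w⟫ := by
    intro z u w
    rcases eq_or_ne z 0 with rfl | hz
    · simp
    have hn : (‖z‖ : ℝ) ^ 2 ≠ 0 := pow_ne_zero _ (norm_ne_zero_iff.mpr hz)
    have hw : J z ((-(‖z‖ ^ 2)⁻¹) • J z w) = w := by
      rw [map_smul, hJsq, smul_smul]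
      rw [show (-(‖z‖ ^ 2)⁻¹ * -(‖z‖ ^ 2) : ℝ) = 1 by field_simp, one_smul]
    calc ⟪J z u, w⟫ = ⟪J z u, J z ((-(‖z‖ ^ 2)⁻¹) • J z w)⟫ := by rw [hw]
      _ = ‖z‖ ^ 2 * ⟪u, (-(‖z‖ ^ 2)⁻¹) • J z w⟫ := hA' z u _
      _ = -⟪u, J z w⟫ := by rw [real_inner_smul_right]; field_simp
  have hzero : ∀ (z : 𝕫) (u : 𝕍), ⟪J z u, u⟫ = 0 := by
    intro z u
    have h1 := hskew z u u
    have h2 : ⟪u, J z u⟫ = ⟪J z u, u⟫ := real_inner_comm _ _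
    linarith
  have hmemW : ∀ (a : ℝ) (z : 𝕫),
      a • v + J z v ∈ (ℝ ∙ v) ⊔ LinearMap.range (J.flip v) := by
    intro a z
    apply Submodule.add_mem
    · exact Submodule.mem_sup_left
        (Submodule.smul_mem _ a (Submodule.mem_span_singleton_self v))
    · exact Submodule.mem_sup_right ⟨z, rfl⟩
  have hWmem : ∀ x ∈ (ℝ ∙ v) ⊔ LinearMap.range (J.flip v),
      ∃ (a : ℝ) (z : 𝕫), x = a • v + J z v := by
    intro x hx
    rcases Submodule.mem_sup.mp hx with ⟨y, hy, w, hw, rfl⟩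
    rcases Submodule.mem_span_singleton.mp hy with ⟨a, rfl⟩
    rcases hw with ⟨z, rfl⟩
    exact ⟨a, z, rfl⟩
  constructor
  · -- J²-condition → invariance
    intro h z x hx
    rcases Submodule.mem_map.mp hx with ⟨y, hyW, rfl⟩
    obtain ⟨a, z', rfl⟩ := hWmem y hyW
    set c : ℝ := ⟪z, z'⟫ / ‖z'‖ ^ 2 with hc
    have hr : ⟪z - c • z', z'⟫ = 0 := by
      rcases eq_or_ne z' 0 with rfl | h0
      · simp
      · have hn : (‖z'‖ : ℝ) ^ 2 ≠ 0 := pow_ne_zero _ (norm_ne_zero_iff.mpr h0)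
        rw [inner_sub_left, real_inner_smul_left, real_inner_self_eq_norm_sq, hc]
        field_simp; ring
    obtain ⟨z₃, hz₃⟩ := h (z - c • z') z' hr
    have hzdecomp : z = c • z' + (z - c • z') := by abel
    have h2 : J z (J z' v) = (-(c * ‖z'‖ ^ 2)) • v + J z₃ v := by
      conv_lhs => rw [hzdecomp]
      rw [map_add, LinearMap.add_apply, hz₃, map_smul, LinearMap.smul_apply, hJsq]
      module
    have keyeq : J z (a • v + J z' v) =
        (-(c * ‖z'‖ ^ 2)) • v + J (a • z + z₃) v := by
      rw [map_add, map_smul, h2, map_add, map_smul, LinearMap.add_apply,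
        LinearMap.smul_apply]
      module
    rw [keyeq]
    exact hmemW _ _
  · -- invariance → J²-condition
    intro h z₁ z₂ hperp
    rcases eq_or_ne v 0 with rfl | hv
    · exact ⟨0, by simp⟩
    have hmem : J z₂ v ∈ (ℝ ∙ v) ⊔ LinearMap.range (J.flip v) := by
      have := hmemW 0 z₂
      simpa using this
    have h2 : J z₁ (J z₂ v) ∈ (ℝ ∙ v) ⊔ LinearMap.range (J.flip v) :=
      h z₁ (Submodule.mem_map_of_mem hmem)
    obtain ⟨a, z₃, hx⟩ := hWmem _ h2
    have hinner : ⟪J z₁ (J z₂ v), v⟫ = 0 := by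
      rw [hskew]
      have := hA z₂ z₁ v
      rw [this, show ⟪z₂, z₁⟫ = (0 : ℝ) from by rw [real_inner_comm]; exact hperp]
      ring
    have h0 : ⟪a • v + J z₃ v, v⟫ = 0 := by rw [← hx]; exact hinner
    rw [inner_add_left, real_inner_smul_left, hzero, real_inner_self_eq_norm_sq] at h0
    have hvn : (‖v‖ : ℝ) ^ 2 ≠ 0 := pow_ne_zero _ (norm_ne_zero_iff.mpr hv)
    have ha : a = 0 := by
      have : a * ‖v‖ ^ 2 = 0 := by linarith
      exact (mul_eq_zero.mp this).resolve_right hvn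
    exact ⟨z₃, by rw [hx, ha, zero_smul, zero_add]⟩
end

section
/- For v ∈ 𝔳 the following are equivalent: (i) v satisfies the J²-condition; (ii) the subspace ker_𝔳(ad v) ∩ v^⊥ of 𝔳 is invariant under J_z for every z ∈ 𝔷; (iii) J_𝔷(ker_𝔳(ad v) ∩ v^⊥) ⊆ ker_𝔳(ad v). -/
open RealInnerProductSpace

/-- For `v ∈ 𝔳` the following are equivalent: (i) `v` satisfies the `J²`-condition;
(ii) the subspace `ker_𝔳(ad v) ∩ v^⊥` is invariant under `J_z` for every `z ∈ 𝔷`;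
(iii) `J_𝔷(ker_𝔳(ad v) ∩ v^⊥) ⊆ ker_𝔳(ad v)`. Here `ker_𝔳(ad v) = {w : [v,w] = 0}`. -/
theorem stmt_5
    {𝕍 𝕫 : Type*} [NormedAddCommGroup 𝕍] [InnerProductSpace ℝ 𝕍] [FiniteDimensional ℝ 𝕍]
    [NormedAddCommGroup 𝕫] [InnerProductSpace ℝ 𝕫] [FiniteDimensional ℝ 𝕫]
    (J : 𝕫 →ₗ[ℝ] 𝕍 →ₗ[ℝ] 𝕍)
    (hJsq : ∀ (z : 𝕫) (v : 𝕍), J z (J z v) = -(‖z‖ ^ 2) • v)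
    (hJnorm : ∀ (z : 𝕫) (v : 𝕍), ‖J z v‖ = ‖z‖ * ‖v‖)
    (br : 𝕍 →ₗ[ℝ] 𝕍 →ₗ[ℝ] 𝕫)
    (hbr : ∀ (U V : 𝕍) (Z : 𝕫), ⟪br U V, Z⟫ = ⟪J Z U, V⟫)
    (v : 𝕍) :
    List.TFAE
      [ (∀ z₁ z₂ : 𝕫, ⟪z₁, z₂⟫ = 0 → ∃ z₃ : 𝕫, J z₁ (J z₂ v) = J z₃ v),
        (∀ z : 𝕫, Submodule.map (J z) (LinearMap.ker (br v) ⊓ (ℝ ∙ v)ᗮ) ≤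
          LinearMap.ker (br v) ⊓ (ℝ ∙ v)ᗮ),
        (∀ (z : 𝕫) (w : 𝕍), w ∈ LinearMap.ker (br v) ⊓ (ℝ ∙ v)ᗮ →
          J z w ∈ LinearMap.ker (br v)) ] := by
  have hz0 : ∀ (z : 𝕫) (u w : 𝕍), ⟪J z u, J z w⟫ = ‖z‖ ^ 2 * ⟪u, w⟫ := by
    intro z u w
    have h1 := hJnorm z (u + w)
    rw [map_add] at h1
    have h2 := hJnorm z u
    have h3 := hJnorm z w
    rw [real_inner_eq_norm_add_mul_self_sub_norm_mul_self_sub_norm_mul_self_div_two (J z u) (J z w),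
      real_inner_eq_norm_add_mul_self_sub_norm_mul_self_sub_norm_mul_self_div_two u w,
      h1, h2, h3]
    ring
  have hskew : ∀ (z : 𝕫) (u w : 𝕍), ⟪J z u, w⟫ = -⟪u, J z w⟫ := by
    intro z u w
    by_cases hz : z = 0
    · subst hz; rw [map_zero]; simp
    · have h := hz0 z u (J z w)
      rw [hJsq, inner_smul_right] at h
      have hn : (‖z‖ : ℝ) ^ 2 ≠ 0 := pow_ne_zero 2 (norm_ne_zero_iff.mpr hz)
      exact mul_left_cancel₀ hn (show ‖z‖ ^ 2 * ⟪J z u, w⟫ = ‖z‖ ^ 2 * -⟪u, J z w⟫ by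
        linarith)
  have hskew' : ∀ (z : 𝕫) (u w : 𝕍), ⟪u, J z w⟫ = -⟪J z u, w⟫ := by
    intro z u w; rw [hskew]; ring
  have hanti : ∀ (z₁ z₂ : 𝕫) (u : 𝕍),
      J z₁ (J z₂ u) + J z₂ (J z₁ u) = -(2 * ⟪z₁, z₂⟫) • u := by
    intro z₁ z₂ u
    have h := hJsq (z₁ + z₂) u
    simp only [map_add, LinearMap.add_apply, hJsq z₁ u, hJsq z₂ u] at h
    have hn : ‖z₁ + z₂‖ ^ 2 = ‖z₁‖ ^ 2 + 2 * ⟪z₁, z₂⟫ + ‖z₂‖ ^ 2 := norm_add_sq_real z₁ z₂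
    rw [hn] at h
    linear_combination (norm := module) h
  have hker : ∀ w : 𝕍, w ∈ LinearMap.ker (br v) ↔ ∀ z : 𝕫, ⟪J z v, w⟫ = 0 := by
    intro w
    rw [LinearMap.mem_ker]
    constructor
    · intro h z; rw [← hbr, h, inner_zero_left]
    · intro h
      have h0 : ⟪br v w, br v w⟫ = 0 := by rw [hbr, h]
      exact inner_self_eq_zero.mp h0
  have hJvv : ∀ z : 𝕫, ⟪v, J z v⟫ = 0 := by
    intro z
    have h1 := hskew z v v
    have h2 : ⟪J z v, v⟫ = ⟪v, J z v⟫ := real_inner_comm _ _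
    linarith
  tfae_have 1 → 3
  | h1, z, w, hw => by
    rw [Submodule.mem_inf] at hw
    obtain ⟨hwk, hwo⟩ := hw
    rw [Submodule.mem_orthogonal_singleton_iff_inner_right] at hwo
    rw [hker] at hwk ⊢
    intro z'
    by_cases hz : z = 0
    · subst hz; rw [map_zero]; simp
    have hn : (‖z‖ : ℝ) ^ 2 ≠ 0 := pow_ne_zero 2 (norm_ne_zero_iff.mpr hz)
    set a : ℝ := ⟪z, z'⟫ / ‖z‖ ^ 2 with ha
    have hzz : ⟪z, z' - a • z⟫ = 0 := by
      rw [inner_sub_right, real_inner_smul_right, real_inner_self_eq_norm_sq, ha]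
      field_simp
      ring
    obtain ⟨z₃, hz₃⟩ := h1 z (z' - a • z) hzz
    have hdecomp : J z (J z' v) = (a * (-(‖z‖ ^ 2))) • v + J z₃ v := by
      have hz' : z' = (z' - a • z) + a • z := by abel
      rw [hz']
      simp only [map_add, map_smul, LinearMap.add_apply, LinearMap.smul_apply]
      rw [hz₃, hJsq z v, smul_smul]
      abel
    rw [hskew' z (J z' v) w, hdecomp, inner_add_left, real_inner_smul_left, hwk z₃]
    rw [hwo]
    ring
  tfae_have 3 → 2
  | h3, z, w, hw => by
    obtain ⟨u, hu0, rfl⟩ := hw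
    have hu : u ∈ LinearMap.ker (br v) ⊓ (ℝ ∙ v)ᗮ := hu0
    refine Submodule.mem_inf.mpr ⟨h3 z u hu, ?_⟩
    rw [Submodule.mem_orthogonal_singleton_iff_inner_right]
    have huk := (Submodule.mem_inf.mp hu).1
    rw [hker] at huk
    rw [hskew' z v u, huk z]
    ring
  tfae_have 2 → 3
  | h2, z, w, hw => (Submodule.mem_inf.mp (h2 z (Submodule.mem_map_of_mem hw))).1
  tfae_have 3 → 1
  | h3, z₁, z₂, hz => by
    set u : 𝕍 := J z₁ (J z₂ v) with hu
    have huv : ⟪v, u⟫ = 0 := by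
      have ha := hanti z₁ z₂ v
      rw [hz] at ha
      have ha' : J z₂ (J z₁ v) = -u := by
        rw [hu]
        have : J z₁ (J z₂ v) + J z₂ (J z₁ v) = 0 := by rw [ha]; simp
        linear_combination (norm := module) this
      have e1 : ⟪v, u⟫ = -⟪J z₁ v, J z₂ v⟫ := by rw [hu, hskew' z₁ v (J z₂ v)]
      have e2 : ⟪v, J z₂ (J z₁ v)⟫ = -⟪J z₂ v, J z₁ v⟫ := hskew' z₂ v (J z₁ v)
      rw [ha', inner_neg_right] at e2
      have hc : ⟪J z₂ v, J z₁ v⟫ = ⟪J z₁ v, J z₂ v⟫ := real_inner_comm _ _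
      linarith [e1, e2, hc]
    have huK : ∀ w ∈ LinearMap.ker (br v) ⊓ (ℝ ∙ v)ᗮ, ⟪w, u⟫ = 0 := by
      intro w hw
      have hk := h3 z₁ w hw
      rw [hker] at hk
      have := hk z₂
      have hc : ⟪J z₁ w, J z₂ v⟫ = ⟪J z₂ v, J z₁ w⟫ := real_inner_comm _ _
      rw [hu, hskew' z₁ w (J z₂ v)]
      linarith [this, hc]
    -- K = ((ℝ ∙ v) ⊔ range (J.flip v))ᗮ
    set R : Submodule ℝ 𝕍 := LinearMap.range (J.flip v) with hR
    have hKer : LinearMap.ker (br v) = Rᗮ := by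
      ext w
      rw [hker, Submodule.mem_orthogonal]
      constructor
      · rintro h x ⟨z, rfl⟩
        exact h z
      · intro h z
        exact h (J z v) ⟨z, rfl⟩
    have hKeq : LinearMap.ker (br v) ⊓ (ℝ ∙ v)ᗮ = ((ℝ ∙ v) ⊔ R)ᗮ := by
      rw [hKer, inf_comm, Submodule.inf_orthogonal]
    have huS : u ∈ (ℝ ∙ v) ⊔ R := by
      rw [← Submodule.orthogonal_orthogonal ((ℝ ∙ v) ⊔ R), ← hKeq]
      rw [Submodule.mem_orthogonal]
      exact huK
    rw [Submodule.mem_sup] at huS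
    obtain ⟨x, hx, y, hy, hxy⟩ := huS
    obtain ⟨a, rfl⟩ := Submodule.mem_span_singleton.mp hx
    obtain ⟨z₃, rfl⟩ := LinearMap.mem_range.mp (show y ∈ LinearMap.range (J.flip v) from hy)
    have hav : a • v = 0 := by
      have : ⟪v, u⟫ = a * ⟪v, v⟫ + ⟪v, J z₃ v⟫ := by
        rw [← hxy, inner_add_right, real_inner_smul_right]
        rfl
      rw [huv, hJvv z₃] at this
      rcases mul_eq_zero.mp (by linarith : a * ⟪v, v⟫ = 0) with h | h
      · rw [h, zero_smul]
      · rw [inner_self_eq_zero.mp h, smul_zero]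
    refine ⟨z₃, ?_⟩
    rw [← hxy, hav, zero_add]
    rfl
  tfae_finish
end

section
/- If there exists a nonzero vector v ∈ 𝔳 satisfying the J²-condition, then dim 𝔷 ∈ {0, 1, 3, 7}; moreover, the subspace ℝv + J_𝔷v of 𝔳 has dimension dim 𝔷 + 1 and contains no subspace invariant under all the operators J_z (z ∈ 𝔷) other than {0} and itself (i.e. it is a nontrivial irreducible Clifford module). -/
open RealInnerProductSpace Module


section Hz
variable {W : Type*} [NormedAddCommGroup W] [InnerProductSpace ℝ W]
variable (mul : W →ₗ[ℝ] W →ₗ[ℝ] W) (e : W)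

private lemma hz_sq (hmn : ∀ x y : W, ‖mul x y‖ = ‖x‖ * ‖y‖) (x y : W) :
    ⟪mul x y, mul x y⟫ = ⟪x,x⟫ * ⟪y,y⟫ := by
  rw [real_inner_self_eq_norm_mul_norm, real_inner_self_eq_norm_mul_norm,
    real_inner_self_eq_norm_mul_norm, hmn]; ring

private lemma hz_compL (hmn : ∀ x y : W, ‖mul x y‖ = ‖x‖ * ‖y‖) (x y z : W) :
    ⟪mul x y, mul x z⟫ = ⟪x,x⟫ * ⟪y,z⟫ := by
  have h := hz_sq mul hmn x (y+z)
  simp only [map_add, inner_add_left, inner_add_right] at h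
  linear_combination (h - hz_sq mul hmn x y - hz_sq mul hmn x z)/2
    - real_inner_comm (mul x y) (mul x z) / 2 - (⟪x,x⟫/2) * real_inner_comm z y

private lemma hz_exch (hmn : ∀ x y : W, ‖mul x y‖ = ‖x‖ * ‖y‖) (x y u z : W) :
    ⟪mul x y, mul u z⟫ + ⟪mul u y, mul x z⟫ = 2*⟪x,u⟫*⟪y,z⟫ := by
  have h := hz_compL mul hmn (x+u) y z
  simp only [map_add, LinearMap.add_apply, inner_add_left, inner_add_right] at h
  linear_combination h - hz_compL mul hmn x y z - hz_compL mul hmn u y z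
    - ⟪y,z⟫ * real_inner_comm u x

end Hz

section Hz2
variable {W : Type*} [NormedAddCommGroup W] [InnerProductSpace ℝ W]
variable (mul : W →ₗ[ℝ] W →ₗ[ℝ] W) (e : W)

private lemma hz_compR (hmn : ∀ x y : W, ‖mul x y‖ = ‖x‖ * ‖y‖) (x y z : W) :
    ⟪mul x y, mul z y⟫ = ⟪x,z⟫ * ⟪y,y⟫ := by
  have h := hz_exch mul hmn x y z y
  linear_combination h/2 + real_inner_comm (mul z y) (mul x y)/2

private lemma hz_A1 (hmn : ∀ x y : W, ‖mul x y‖ = ‖x‖ * ‖y‖)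
    (hId1 : ∀ x, mul e x = x) (x y z : W) :
    ⟪mul x y, z⟫ = 2*⟪x,e⟫*⟪y,z⟫ - ⟪y, mul x z⟫ := by
  have h := hz_exch mul hmn x y e z
  rw [hId1, hId1] at h
  linear_combination h

private lemma hz_A2 (hmn : ∀ x y : W, ‖mul x y‖ = ‖x‖ * ‖y‖)
    (hId2 : ∀ x, mul x e = x) (x y z : W) :
    ⟪mul x y, z⟫ = 2*⟪y,e⟫*⟪x,z⟫ - ⟪mul z y, x⟫ := by
  have h := hz_exch mul hmn x y z e
  rw [hId2, hId2] at h
  linear_combination h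

private lemma hz_XX (hmn : ∀ x y : W, ‖mul x y‖ = ‖x‖ * ‖y‖)
    (hId1 : ∀ x, mul e x = x) (x y : W) :
    mul x (mul x y) = (2*⟪x,e⟫) • (mul x y) - ⟪x,x⟫ • y := by
  apply ext_inner_right ℝ; intro z
  rw [inner_sub_left, real_inner_smul_left, real_inner_smul_left,
    hz_A1 mul e hmn hId1 x (mul x y) z, hz_compL mul hmn x y z]

private lemma hz_XXR (hmn : ∀ x y : W, ‖mul x y‖ = ‖x‖ * ‖y‖)
    (hId2 : ∀ x, mul x e = x) (x y : W) :
    mul (mul y x) x = (2*⟪x,e⟫) • (mul y x) - ⟪x,x⟫ • y := by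
  apply ext_inner_right ℝ; intro z
  rw [inner_sub_left, real_inner_smul_left, real_inner_smul_left,
    hz_A2 mul e hmn hId2 (mul y x) x z, hz_compR mul hmn z x y]
  rw [real_inner_comm z y]; ring

private lemma hz_Lone (hmn : ∀ x y : W, ‖mul x y‖ = ‖x‖ * ‖y‖)
    (hId1 : ∀ x, mul e x = x) (x u y : W) :
    mul x (mul u y) + mul u (mul x y)
      = (2*⟪x,e⟫) • (mul u y) + (2*⟪u,e⟫) • (mul x y) - (2*⟪x,u⟫) • y := by
  have h := hz_XX mul e hmn hId1 (x+u) y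
  simp only [map_add, LinearMap.add_apply, inner_add_left, inner_add_right] at h
  have h1 := hz_XX mul e hmn hId1 x y
  have h2 := hz_XX mul e hmn hId1 u y
  have hcy : ((1:ℝ)*⟪u,x⟫) • y = ((1:ℝ)*⟪x,u⟫) • y := by rw [real_inner_comm x u]
  linear_combination (norm := module) h - h1 - h2 - hcy

private lemma hz_comm (hmn : ∀ x y : W, ‖mul x y‖ = ‖x‖ * ‖y‖)
    (hId1 : ∀ x, mul e x = x) (hId2 : ∀ x, mul x e = x) (x u : W) :
    mul u x = (2*⟪u,e⟫) • x + (2*⟪x,e⟫) • u - (2*⟪x,u⟫) • e - mul x u := by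
  have h := hz_Lone mul e hmn hId1 x u e
  rw [hId2, hId2] at h
  linear_combination (norm := module) h

private lemma hz_R (hmn : ∀ x y : W, ‖mul x y‖ = ‖x‖ * ‖y‖)
    (hId1 : ∀ x, mul e x = x) (hId2 : ∀ x, mul x e = x) (x u a : W)
    (hae : ⟪a,e⟫ = 0) (hax : ⟪a,x⟫ = 0) (hau : ⟪a,u⟫ = 0)
    (haux : ⟪a, mul u x⟫ = 0) :
    mul x (mul u a) = mul (mul u x) a := by
  have hxa : mul x a = (2*⟪x,e⟫) • a - mul a x := by
    have h := hz_comm mul e hmn hId1 hId2 a x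
    rw [hae, hax] at h
    simpa using h
  have hcax : mul u (mul a x) = (2*⟪u,e⟫) • (mul a x) - mul a (mul u x) := by
    have h := hz_Lone mul e hmn hId1 u a x
    rw [real_inner_comm a u, hau, hae] at h
    simp only [mul_zero, zero_smul, add_zero, sub_zero, zero_sub] at h
    linear_combination (norm := module) h
  have hd := hz_Lone mul e hmn hId1 x u a
  rw [hxa] at hd
  simp only [map_sub, map_smul] at hd
  rw [hcax] at hd
  have hw := hz_comm mul e hmn hId1 hId2 a (mul u x)
  rw [hae, haux] at hw
  have huxe : ⟪mul u x, e⟫ = 2*⟪x,e⟫*⟪u,e⟫ - ⟪x,u⟫ := by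
    have h := hz_A2 mul e hmn hId2 u x e
    rw [hId1] at h
    linarith
  rw [huxe] at hw
  linear_combination (norm := module) hd - hw

end Hz2


section HW
variable {W : Type*} [NormedAddCommGroup W] [InnerProductSpace ℝ W]

private lemma hz_unit_perp [FiniteDimensional ℝ W] {ι : Type} [Fintype ι] (f : ι → W)
    (h : Fintype.card ι < finrank ℝ W) :
    ∃ a : W, ‖a‖ = 1 ∧ ∀ i, ⟪a, f i⟫ = 0 := by
  set S := Submodule.span ℝ (Set.range f) with hS
  have hlt : finrank ℝ S < finrank ℝ W := lt_of_le_of_lt (finrank_range_le_card f) h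
  have hne : Sᗮ ≠ ⊥ := by
    intro hb
    have h2 := S.finrank_add_finrank_orthogonal
    rw [hb, finrank_bot] at h2
    omega
  obtain ⟨a, haS, ha0⟩ := (Submodule.ne_bot_iff _).mp hne
  refine ⟨‖a‖⁻¹ • a, norm_smul_inv_norm ha0, fun i => ?_⟩
  have hfi : f i ∈ S := Submodule.subset_span ⟨i, rfl⟩
  have h0 : ⟪f i, a⟫ = 0 := (Submodule.mem_orthogonal _ _).mp haS (f i) hfi
  rw [real_inner_smul_left, real_inner_comm (f i) a, h0]
  ring
end HW

section HW2
variable {W : Type*} [NormedAddCommGroup W] [InnerProductSpace ℝ W]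

private theorem hz_hurwitz [FiniteDimensional ℝ W] (mul : W →ₗ[ℝ] W →ₗ[ℝ] W) (e : W)
    (he : ‖e‖ = 1) (hId1 : ∀ x, mul e x = x) (hId2 : ∀ x, mul x e = x)
    (hmn : ∀ x y : W, ‖mul x y‖ = ‖x‖ * ‖y‖) :
    finrank ℝ W ∈ ({1,2,4,8} : Set ℕ) := by
  have hsq := hz_sq mul hmn
  have hcompL := hz_compL mul hmn
  have hcompR := hz_compR mul hmn
  have hA1 := hz_A1 mul e hmn hId1
  have hXX := hz_XX mul e hmn hId1
  have hXXR := hz_XXR mul e hmn hId2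
  have hcm := hz_comm mul e hmn hId1 hId2
  have hR := hz_R mul e hmn hId1 hId2
  have rev : ∀ x y : W, ⟪x,y⟫ = 0 → ⟪y,x⟫ = 0 := fun x y h => (real_inner_comm x y).trans h
  have hee : ⟪e,e⟫ = 1 := by rw [real_inner_self_eq_norm_mul_norm, he]; norm_num
  have : Nontrivial W := ⟨⟨e, 0, fun h => by rw [h, norm_zero] at he; norm_num at he⟩⟩
  have hpos : 0 < finrank ℝ W := finrank_pos
  simp only [Set.mem_insert_iff, Set.mem_singleton_iff]
  by_contra hcon
  push_neg at hcon
  obtain ⟨c1, c2, c4, c8⟩ := hcon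
  obtain ⟨i, hni, hpi⟩ := hz_unit_perp ![e] (by simp; omega)
  have hie : ⟪i,e⟫ = 0 := by simpa using hpi 0
  have hii : ⟪i,i⟫ = 1 := by rw [real_inner_self_eq_norm_mul_norm, hni]; norm_num
  have hei : ⟪e,i⟫ = 0 := rev _ _ hie
  obtain ⟨j, hnj, hpj⟩ := hz_unit_perp ![e,i] (by simp; omega)
  have hje : ⟪j,e⟫ = 0 := by simpa using hpj 0
  have hji : ⟪j,i⟫ = 0 := by simpa using hpj 1
  have hjj : ⟪j,j⟫ = 1 := by rw [real_inner_self_eq_norm_mul_norm, hnj]; norm_num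
  have hej : ⟪e,j⟫ = 0 := rev _ _ hje
  have hij : ⟪i,j⟫ = 0 := rev _ _ hji
  -- facts about k = mul i j
  have hke : ⟪mul i j, e⟫ = 0 := by rw [hA1 i j e, hId2 i, hie, hji]; ring
  have hki : ⟪mul i j, i⟫ = 0 := by
    have h := hcompL i j e; rw [hId2 i] at h; rw [h, hje]; ring
  have hkj : ⟪mul i j, j⟫ = 0 := by
    have h := hcompR i j e; rw [hId1 j] at h; rw [h, hie]; ring
  have hnk : ‖mul i j‖ = 1 := by rw [hmn, hni, hnj]; norm_num
  have hkk : ⟪mul i j, mul i j⟫ = 1 := by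
    rw [real_inner_self_eq_norm_mul_norm, hnk]; norm_num
  have hek : ⟪e, mul i j⟫ = 0 := rev _ _ hke
  have hik : ⟪i, mul i j⟫ = 0 := rev _ _ hki
  have hjk : ⟪j, mul i j⟫ = 0 := rev _ _ hkj
  have hON4 : Orthonormal ℝ ![e, i, j, mul i j] := by
    rw [orthonormal_iff_ite]
    intro a b
    fin_cases a <;> fin_cases b <;>
      simp [hee, hii, hjj, hkk, hie, hje, hji, hke, hki, hkj, hei, hej, hij, hek, hik, hjk,
        hmn, he, hni, hnj]
  have h4le : 4 ≤ finrank ℝ W := by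
    simpa using hON4.linearIndependent.fintype_card_le_finrank
  obtain ⟨l, hnl, hpl⟩ := hz_unit_perp ![e, i, j, mul i j] (by simp; omega)
  have hle : ⟪l,e⟫ = 0 := by simpa using hpl 0
  have hli : ⟪l,i⟫ = 0 := by simpa using hpl 1
  have hlj : ⟪l,j⟫ = 0 := by simpa using hpl 2
  have hlk : ⟪l, mul i j⟫ = 0 := by simpa using hpl 3
  have hll : ⟪l,l⟫ = 1 := by rw [real_inner_self_eq_norm_mul_norm, hnl]; norm_num
  have hel : ⟪e,l⟫ = 0 := rev _ _ hle
  have hil : ⟪i,l⟫ = 0 := rev _ _ hli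
  have hjl : ⟪j,l⟫ = 0 := rev _ _ hlj
  have hkl : ⟪mul i j, l⟫ = 0 := rev _ _ hlk
  -- quaternion table
  have qii : mul i i = -e := by
    have h := hXX i e; rw [hId2 i] at h; rw [hie, hii] at h; simpa using h
  have qjj : mul j j = -e := by
    have h := hXX j e; rw [hId2 j] at h; rw [hje, hjj] at h; simpa using h
  have qik : mul i (mul i j) = -j := by
    have h := hXX i j; rw [hie, hii] at h; simpa using h
  have qji : mul j i = -(mul i j) := by
    have h := hcm i j; rw [hje, hie, hij] at h; simpa using h
  have qkj : mul (mul i j) j = -i := by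
    have h := hXXR j i; rw [hje, hjj] at h; simpa using h
  have qjk : mul j (mul i j) = i := by
    have h := hcm (mul i j) j; rw [hje, hke, hkj, qkj] at h; simpa using h
  have qki : mul (mul i j) i = j := by
    have h := hcm i (mul i j); rw [hke, hie, hik, qik] at h; simpa using h
  have qkk : mul (mul i j) (mul i j) = -e := by
    have h := hXX (mul i j) e; rw [hId2] at h; rw [hke, hkk] at h; simpa using h
  -- products with l orthogonality
  have o_il_e : ⟪mul i l, e⟫ = 0 := by rw [hA1 i l e, hId2 i, hie, hli]; ring
  have o_il_i : ⟪mul i l, i⟫ = 0 := by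
    rw [hA1 i l i, qii, hie]; simp [inner_neg_right, hle]
  have o_il_j : ⟪mul i l, j⟫ = 0 := by rw [hA1 i l j, hie]; simp [hlk]
  have o_il_k : ⟪mul i l, mul i j⟫ = 0 := by
    rw [hA1 i l (mul i j), qik, hie]; simp [inner_neg_right, hlj]
  have o_jl_e : ⟪mul j l, e⟫ = 0 := by rw [hA1 j l e, hId2 j, hje, hlj]; ring
  have o_jl_i : ⟪mul j l, i⟫ = 0 := by
    rw [hA1 j l i, qji, hje]; simp [inner_neg_right, hlk]
  have o_jl_j : ⟪mul j l, j⟫ = 0 := by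
    rw [hA1 j l j, qjj, hje]; simp [inner_neg_right, hle]
  have o_jl_k : ⟪mul j l, mul i j⟫ = 0 := by
    rw [hA1 j l (mul i j), qjk, hje]; simp [hli]
  have o_kl_e : ⟪mul (mul i j) l, e⟫ = 0 := by
    rw [hA1 (mul i j) l e, hId2, hke, hlk]; ring
  have o_kl_i : ⟪mul (mul i j) l, i⟫ = 0 := by
    rw [hA1 (mul i j) l i, qki, hke]; simp [hlj]
  have o_kl_j : ⟪mul (mul i j) l, j⟫ = 0 := by
    rw [hA1 (mul i j) l j, qkj, hke]; simp [inner_neg_right, hli]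
  have o_kl_k : ⟪mul (mul i j) l, mul i j⟫ = 0 := by
    rw [hA1 (mul i j) l (mul i j), qkk, hke]; simp [inner_neg_right, hle]
  have o_l_il : ⟪l, mul i l⟫ = 0 := by
    have h := hcompR e l i; rw [hId1 l] at h; rw [h, hei]; ring
  have o_l_jl : ⟪l, mul j l⟫ = 0 := by
    have h := hcompR e l j; rw [hId1 l] at h; rw [h, hej]; ring
  have o_l_kl : ⟪l, mul (mul i j) l⟫ = 0 := by
    have h := hcompR e l (mul i j); rw [hId1 l] at h; rw [h, hek]; ring
  have o_il_jl : ⟪mul i l, mul j l⟫ = 0 := by rw [hcompR i l j, hij]; ring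
  have o_il_kl : ⟪mul i l, mul (mul i j) l⟫ = 0 := by rw [hcompR i l (mul i j), hik]; ring
  have o_jl_kl : ⟪mul j l, mul (mul i j) l⟫ = 0 := by rw [hcompR j l (mul i j), hjk]; ring
  have n_il : ⟪mul i l, mul i l⟫ = 1 := by rw [hsq i l, hii, hll]; ring
  have n_jl : ⟪mul j l, mul j l⟫ = 1 := by rw [hsq j l, hjj, hll]; ring
  have n_kl : ⟪mul (mul i j) l, mul (mul i j) l⟫ = 1 := by rw [hsq (mul i j) l, hkk, hll]; ring
  have v5 : ![e, i, j, mul i j, l, mul i l, mul j l, mul (mul i j) l] (5 : Fin 8) = mul i l := rfl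
  have v6 : ![e, i, j, mul i j, l, mul i l, mul j l, mul (mul i j) l] (6 : Fin 8) = mul j l := rfl
  have v7 : ![e, i, j, mul i j, l, mul i l, mul j l, mul (mul i j) l] (7 : Fin 8) = mul (mul i j) l := rfl
  have hON8 : Orthonormal ℝ ![e, i, j, mul i j, l, mul i l, mul j l, mul (mul i j) l] := by
    rw [orthonormal_iff_ite]
    intro a b
    fin_cases a <;> fin_cases b <;>
      simp [hee, hii, hjj, hkk, hll, n_il, n_jl, n_kl,
        hie, hje, hji, hke, hki, hkj, hei, hej, hij, hek, hik, hjk,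
        hle, hli, hlj, hlk, hel, hil, hjl, hkl,
        o_il_e, o_il_i, o_il_j, o_il_k, o_jl_e, o_jl_i, o_jl_j, o_jl_k,
        o_kl_e, o_kl_i, o_kl_j, o_kl_k, o_l_il, o_l_jl, o_l_kl,
        o_il_jl, o_il_kl, o_jl_kl,
        rev _ _ o_il_e, rev _ _ o_il_i, rev _ _ o_il_j, rev _ _ o_il_k,
        rev _ _ o_jl_e, rev _ _ o_jl_i, rev _ _ o_jl_j, rev _ _ o_jl_k,
        rev _ _ o_kl_e, rev _ _ o_kl_i, rev _ _ o_kl_j, rev _ _ o_kl_k,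
        rev _ _ o_l_il, rev _ _ o_l_jl, rev _ _ o_l_kl,
        rev _ _ o_il_jl, rev _ _ o_il_kl, rev _ _ o_jl_kl, v5, v6, v7,
        hmn, he, hni, hnj, hnl]
  have h8le : 8 ≤ finrank ℝ W := by
    simpa using hON8.linearIndependent.fintype_card_le_finrank
  obtain ⟨a, hna, hpa⟩ :=
    hz_unit_perp ![e, i, j, mul i j, l, mul i l, mul j l, mul (mul i j) l] (by simp; omega)
  have hae : ⟪a,e⟫ = 0 := by simpa using hpa 0
  have hai : ⟪a,i⟫ = 0 := by simpa using hpa 1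
  have haj : ⟪a,j⟫ = 0 := by simpa using hpa 2
  have hak : ⟪a, mul i j⟫ = 0 := by simpa using hpa 3
  have hal : ⟪a,l⟫ = 0 := by simpa using hpa 4
  have hail : ⟪a, mul i l⟫ = 0 := by simpa using hpa 5
  have hajl : ⟪a, mul j l⟫ = 0 := by simpa using hpa 6
  have hakl : ⟪a, mul (mul i j) l⟫ = 0 := by simpa using hpa 7
  have qli : mul l i = -(mul i l) := by
    have h := hcm i l; rw [hle, hie, hil] at h; simpa using h
  have qlj : mul l j = -(mul j l) := by
    have h := hcm j l; rw [hle, hje, hjl] at h; simpa using h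
  have qlk : mul l (mul i j) = -(mul (mul i j) l) := by
    have h := hcm (mul i j) l; rw [hle, hke, hkl] at h; simpa using h
  have ijl : mul i (mul j l) = -(mul (mul i j) l) := by
    have h := hR i j l hle hli hlj (by rw [qji]; simp [inner_neg_right, hlk])
    rw [qji] at h
    simpa [map_neg, LinearMap.neg_apply] using h
  have jli : mul (mul l j) i = -(mul (mul i j) l) := by
    have h := hcm i (mul j l)
    rw [o_jl_e, hie, rev _ _ o_jl_i, ijl] at h
    have h2 : mul (mul j l) i = mul (mul i j) l := by simpa using h
    rw [qlj, map_neg, LinearMap.neg_apply, h2]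
  have hlae : ⟪mul l a, e⟫ = 0 := by rw [hA1 l a e, hId2 l, hle, hal]; ring
  have hlai : ⟪mul l a, i⟫ = 0 := by
    rw [hA1 l a i, qli, hle]; simp [inner_neg_right, hail]
  have hlaj : ⟪mul l a, j⟫ = 0 := by
    rw [hA1 l a j, qlj, hle]; simp [inner_neg_right, hajl]
  have hlak : ⟪mul l a, mul i j⟫ = 0 := by
    rw [hA1 l a (mul i j), qlk, hle]; simp [inner_neg_right, hakl]
  have hlaji : ⟪mul l a, mul j i⟫ = 0 := by
    rw [qji]; simp [inner_neg_right, hlak]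
  have E1 : mul j (mul l a) = mul (mul l j) a :=
    hR j l a hae haj hal (by rw [qlj]; simp [inner_neg_right, hajl])
  have E2 : mul i (mul (mul l j) a) = mul (mul (mul l j) i) a :=
    hR i (mul l j) a hae hai (by rw [qlj]; simp [inner_neg_right, hajl])
      (by rw [jli]; simp [inner_neg_right, hakl])
  have E3 : mul i (mul j (mul l a)) = mul (mul j i) (mul l a) :=
    hR i j (mul l a) hlae hlai hlaj hlaji
  have E4 : mul (mul i j) (mul l a) = mul (mul l (mul i j)) a :=
    hR (mul i j) l a hae hak hal (by rw [qlk]; simp [inner_neg_right, hakl])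
  have T1 : mul i (mul j (mul l a)) = -(mul (mul (mul i j) l) a) := by
    rw [E1, E2, jli]; simp [map_neg, LinearMap.neg_apply]
  have T2 : mul i (mul j (mul l a)) = mul (mul (mul i j) l) a := by
    rw [E3, qji]
    simp only [map_neg, LinearMap.neg_apply]
    rw [E4, qlk]
    simp [map_neg, LinearMap.neg_apply]
  have hz0 : mul (mul (mul i j) l) a = 0 := by
    have h2 : (2:ℝ) • (mul (mul (mul i j) l) a) = 0 := by
      linear_combination (norm := module) T1 - T2
    simpa using h2
  have hcontr : ‖mul (mul (mul i j) l) a‖ = 1 := by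
    rw [hmn, hmn, hnk, hnl, hna]; norm_num
  rw [hz0, norm_zero] at hcontr
  norm_num at hcontr

end HW2

set_option maxHeartbeats 1000000 in
/-- If there is a nonzero `v ∈ 𝔳` satisfying the `J²`-condition, then
`dim 𝔷 ∈ {0,1,3,7}`; moreover, `ℝv + J_𝔷v` has dimension `dim 𝔷 + 1` and is a
nontrivial irreducible Clifford module: its only subspaces invariant under all the
operators `J_z` are `{0}` and itself. -/
theorem stmt_6
    {𝕍 𝕫 : Type*} [NormedAddCommGroup 𝕍] [InnerProductSpace ℝ 𝕍] [FiniteDimensional ℝ 𝕍]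
    [NormedAddCommGroup 𝕫] [InnerProductSpace ℝ 𝕫] [FiniteDimensional ℝ 𝕫]
    (J : 𝕫 →ₗ[ℝ] 𝕍 →ₗ[ℝ] 𝕍)
    (hJsq : ∀ (z : 𝕫) (v : 𝕍), J z (J z v) = -(‖z‖ ^ 2) • v)
    (hJnorm : ∀ (z : 𝕫) (v : 𝕍), ‖J z v‖ = ‖z‖ * ‖v‖)
    (br : 𝕍 →ₗ[ℝ] 𝕍 →ₗ[ℝ] 𝕫)
    (hbr : ∀ (U V : 𝕍) (Z : 𝕫), ⟪br U V, Z⟫ = ⟪J Z U, V⟫)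
    (v : 𝕍) (hv : v ≠ 0)
    (hJ2 : ∀ z₁ z₂ : 𝕫, ⟪z₁, z₂⟫ = 0 → ∃ z₃ : 𝕫, J z₁ (J z₂ v) = J z₃ v) :
    Module.finrank ℝ 𝕫 ∈ ({0, 1, 3, 7} : Set ℕ) ∧
    Module.finrank ℝ ((ℝ ∙ v) ⊔ LinearMap.range (J.flip v) : Submodule ℝ 𝕍) =
      Module.finrank ℝ 𝕫 + 1 ∧
    (∀ W : Submodule ℝ 𝕍, W ≤ (ℝ ∙ v) ⊔ LinearMap.range (J.flip v) →
      (∀ z : 𝕫, Submodule.map (J z) W ≤ W) →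
      W = ⊥ ∨ W = (ℝ ∙ v) ⊔ LinearMap.range (J.flip v)) := by
  classical
  have hpolv : ∀ (z : 𝕫) (u w : 𝕍), ⟪J z u, J z w⟫ = ‖z‖^2 * ⟪u,w⟫ := by
    intro z u w
    have hsq : ∀ x : 𝕍, ⟪J z x, J z x⟫ = ‖z‖^2 * ⟪x,x⟫ := fun x => by
      rw [real_inner_self_eq_norm_mul_norm, real_inner_self_eq_norm_mul_norm, hJnorm]; ring
    have h := hsq (u+w)
    simp only [map_add, inner_add_left, inner_add_right] at h
    linear_combination (h - hsq u - hsq w)/2 - real_inner_comm (J z u) (J z w)/2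
      - (‖z‖^2/2) * real_inner_comm w u
  have hpolz : ∀ (z y : 𝕫) (w : 𝕍), ⟪J z w, J y w⟫ = ⟪z,y⟫ * ‖w‖^2 := by
    intro z y w
    have hsq : ∀ s : 𝕫, ⟪J s w, J s w⟫ = ⟪s,s⟫ * ‖w‖^2 := fun s => by
      rw [real_inner_self_eq_norm_mul_norm, hJnorm, real_inner_self_eq_norm_mul_norm]; ring
    have h := hsq (z+y)
    simp only [map_add, LinearMap.add_apply, inner_add_left, inner_add_right] at h
    linear_combination (h - hsq z - hsq y)/2 - real_inner_comm (J z w) (J y w)/2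
      - (‖w‖^2/2) * real_inner_comm y z
  have hskew : ∀ (z : 𝕫) (u w : 𝕍), ⟪J z u, w⟫ = -⟪u, J z w⟫ := by
    intro z u w
    rcases eq_or_ne z 0 with hz | hz
    · simp [hz]
    have hz2 : ‖z‖^2 ≠ 0 := pow_ne_zero _ (norm_ne_zero_iff.mpr hz)
    have h1 : ⟪J z u, J z (J z w)⟫ = ‖z‖^2 * ⟪u, J z w⟫ := hpolv z u (J z w)
    rw [hJsq z w, real_inner_smul_right] at h1
    exact mul_left_cancel₀ hz2 (by linear_combination -h1)
  have hJv_perp : ∀ (z : 𝕫) (w : 𝕍), ⟪J z w, w⟫ = 0 := by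
    intro z w
    have h := hskew z w w
    have h2 : ⟪w, J z w⟫ = ⟪J z w, w⟫ := real_inner_comm (J z w) w
    linarith
  have hinj : Function.Injective (J.flip v) := by
    intro z1 z2 h
    have h1 : J z1 v = J z2 v := h
    have h0 : J (z1 - z2) v = 0 := by
      rw [map_sub, LinearMap.sub_apply, h1, sub_self]
    have hn0 : ‖z1 - z2‖ * ‖v‖ = 0 := by rw [← hJnorm, h0, norm_zero]
    rcases mul_eq_zero.mp hn0 with h | h
    · exact sub_eq_zero.mp (norm_eq_zero.mp h)
    · exact absurd (norm_eq_zero.mp h) hv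
  have hrk : finrank ℝ (LinearMap.range (J.flip v)) = finrank ℝ 𝕫 :=
    LinearMap.finrank_range_of_inj hinj
  have hinf : (ℝ ∙ v) ⊓ LinearMap.range (J.flip v) = ⊥ := by
    rw [Submodule.eq_bot_iff]
    rintro x hx
    obtain ⟨hx1, hx2⟩ := Submodule.mem_inf.mp hx
    obtain ⟨z, hz⟩ := hx2
    obtain ⟨c, hc⟩ := Submodule.mem_span_singleton.mp hx1
    have h0 : ⟪(J.flip v) z, v⟫ = 0 := hJv_perp z v
    rw [hz, ← hc, real_inner_smul_left, real_inner_self_eq_norm_mul_norm] at h0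
    rcases mul_eq_zero.mp h0 with h | h
    · rw [← hc, h, zero_smul]
    · exact absurd (norm_eq_zero.mp (by nlinarith [norm_nonneg v] : ‖v‖ = 0)) hv
  have hdim : finrank ℝ ((ℝ ∙ v) ⊔ LinearMap.range (J.flip v) : Submodule ℝ 𝕍)
      = finrank ℝ 𝕫 + 1 := by
    have h := Submodule.finrank_sup_add_finrank_inf_eq (ℝ ∙ v) (LinearMap.range (J.flip v))
    rw [hinf, finrank_bot, finrank_span_singleton hv, hrk] at h
    omega
  refine ⟨?_, hdim, ?_⟩
  · -- part 1 : Hurwitz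
    set v0 : 𝕍 := ‖v‖⁻¹ • v with hv0def
    clear_value v0
    have hnv : ‖v‖ ≠ 0 := norm_ne_zero_iff.mpr hv
    have hv0 : ‖v0‖ = 1 := by
      rw [hv0def, norm_smul, norm_inv, norm_norm, inv_mul_cancel₀ hnv]
    have hvv0 : v = ‖v‖ • v0 := by rw [hv0def, smul_inv_smul₀ hnv]
    have hv00 : ⟪v0,v0⟫ = 1 := by rw [real_inner_self_eq_norm_mul_norm, hv0]; norm_num
    have hJ20 : ∀ z₁ z₂ : 𝕫, ⟪z₁,z₂⟫ = 0 → ∃ z₃, J z₁ (J z₂ v0) = J z₃ v0 := by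
      intro z1 z2 h
      obtain ⟨z3, h3⟩ := hJ2 z1 z2 h
      refine ⟨z3, ?_⟩
      rw [hv0def, map_smul, map_smul, h3, map_smul]
    set WF := ((ℝ ∙ v) ⊔ LinearMap.range (J.flip v) : Submodule ℝ 𝕍) with hWFdef
    clear_value WF
    have hspan0 : (ℝ ∙ v0) = (ℝ ∙ v) := by
      rw [hv0def]
      exact Submodule.span_singleton_smul_eq (isUnit_iff_ne_zero.mpr (inv_ne_zero hnv)) v
    have hrange0 : LinearMap.range (J.flip v0) = LinearMap.range (J.flip v) := by
      apply le_antisymm <;> rintro x ⟨z, rfl⟩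
      · refine ⟨‖v‖⁻¹ • z, ?_⟩
        show J (‖v‖⁻¹ • z) v = J z v0
        rw [map_smul, LinearMap.smul_apply, hv0def, map_smul]
      · refine ⟨‖v‖ • z, ?_⟩
        show J (‖v‖ • z) v0 = J z v
        rw [map_smul, LinearMap.smul_apply, hv0def, map_smul, smul_smul,
          mul_inv_cancel₀ hnv, one_smul]
    have hWF0 : WF = (ℝ ∙ v0) ⊔ LinearMap.range (J.flip v0) := by
      rw [hWFdef, hspan0, hrange0]
    have hv0WF : v0 ∈ WF := by
      rw [hWF0]
      exact Submodule.mem_sup_left (Submodule.mem_span_singleton_self v0)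
    have hJWF : ∀ z : 𝕫, J z v0 ∈ WF := by
      intro z
      rw [hWF0]
      exact Submodule.mem_sup_right ⟨z, rfl⟩
    have hKEY : ∀ z y : 𝕫, ∃ (s : ℝ) (w : 𝕫), J z (J y v0) = s • v0 + J w v0 := by
      intro z y
      rcases eq_or_ne z 0 with hz | hz
      · exact ⟨0, 0, by simp [hz]⟩
      have hz2 : ‖z‖^2 ≠ 0 := pow_ne_zero _ (norm_ne_zero_iff.mpr hz)
      set cc := ⟪y,z⟫ / ‖z‖^2 with hcc
      have hperp : ⟪z, y - cc • z⟫ = 0 := by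
        rw [inner_sub_right, real_inner_smul_right, real_inner_self_eq_norm_sq,
          real_inner_comm y z, hcc]
        field_simp
        ring
      obtain ⟨z3, h3⟩ := hJ20 z (y - cc • z) hperp
      refine ⟨-(cc * ‖z‖^2), z3, ?_⟩
      have hy : J y v0 = cc • (J z v0) + J (y - cc • z) v0 := by
        rw [map_sub, LinearMap.sub_apply, map_smul, LinearMap.smul_apply]
        module
      rw [hy]
      simp only [map_add, map_smul]
      rw [hJsq z v0, h3]
      module
    set Q : 𝕍 →ₗ[ℝ] 𝕫 := LinearMap.adjoint (J.flip v0) with hQdef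
    clear_value Q
    have hQ : ∀ (w : 𝕍) (y : 𝕫), ⟪Q w, y⟫ = ⟪w, J y v0⟫ := by
      intro w y
      rw [hQdef]
      exact LinearMap.adjoint_inner_left (J.flip v0) y w
    have hQJ : ∀ y : 𝕫, Q (J y v0) = y := by
      intro y
      apply ext_inner_right ℝ
      intro u
      rw [hQ, hpolz y u v0, hv0]
      ring
    have hQv0 : Q v0 = 0 := by
      apply ext_inner_right ℝ
      intro u
      rw [hQ, real_inner_comm, hJv_perp]
      simp
    have hDEC : ∀ w ∈ WF, w = ⟪w, v0⟫ • v0 + J (Q w) v0 := by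
      intro w hw
      rw [hWF0, Submodule.mem_sup] at hw
      obtain ⟨p, hp, q, hq, rfl⟩ := hw
      obtain ⟨c, rfl⟩ := Submodule.mem_span_singleton.mp hp
      obtain ⟨u, rfl⟩ := hq
      have hflipu : (J.flip v0) u = J u v0 := rfl
      rw [hflipu]
      rw [inner_add_left, real_inner_smul_left, hv00, hJv_perp u v0]
      rw [map_add, map_smul, hQv0, hQJ]
      simp
    have hstab : ∀ (z : 𝕫) (w : 𝕍), w ∈ WF → J z w ∈ WF := by
      intro z w hw
      obtain ⟨s, w2, hk⟩ := hKEY z (Q w)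
      have hj : J z w = ⟪w,v0⟫ • J z v0 + (s • v0 + J w2 v0) := by
        conv_lhs => rw [hDEC w hw]
        rw [map_add, map_smul, hk]
      rw [hj]
      exact add_mem (WF.smul_mem _ (hJWF z)) (add_mem (WF.smul_mem _ hv0WF) (hJWF w2))
    let mu : ↥WF →ₗ[ℝ] ↥WF →ₗ[ℝ] ↥WF := LinearMap.mk₂ ℝ
      (fun x y => ⟨⟪(x:𝕍), v0⟫ • (y:𝕍) + J (Q (x:𝕍)) (y:𝕍),
        add_mem (WF.smul_mem _ y.2) (hstab _ _ y.2)⟩)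
      (fun x x' y => by
        apply Subtype.ext
        simp only [Submodule.coe_add, inner_add_left, map_add, LinearMap.add_apply, add_smul]
        module)
      (fun cc x y => by
        apply Subtype.ext
        simp only [Submodule.coe_smul, real_inner_smul_left, map_smul, LinearMap.smul_apply,
          SetLike.val_smul]
        module)
      (fun x y y' => by
        apply Subtype.ext
        simp only [Submodule.coe_add, smul_add, map_add]
        module)
      (fun cc x y => by
        apply Subtype.ext
        simp only [Submodule.coe_smul, map_smul, SetLike.val_smul, smul_smul]
        module)
    have hcoe : ∀ x y : ↥WF,
        ((mu x y : ↥WF) : 𝕍) = ⟪(x:𝕍), v0⟫ • (y:𝕍) + J (Q (x:𝕍)) (y:𝕍) := fun x y => rfl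
    have hId1 : ∀ x : ↥WF, mu ⟨v0, hv0WF⟩ x = x := by
      intro x
      apply Subtype.ext
      rw [hcoe]
      show ⟪v0,v0⟫ • (x:𝕍) + J (Q v0) (x:𝕍) = x
      rw [hv00, hQv0, one_smul, map_zero]
      simp
    have hId2 : ∀ x : ↥WF, mu x ⟨v0, hv0WF⟩ = x := by
      intro x
      apply Subtype.ext
      rw [hcoe]
      exact (hDEC (x:𝕍) x.2).symm
    have hexp : ∀ (s : ℝ) (z : 𝕫) (w : 𝕍),
        ⟪s•w + J z w, s•w + J z w⟫ = (s^2 + ⟪z,z⟫) * ‖w‖^2 := by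
      intro s z w
      have h1 := hpolz z z w
      have h2 := hJv_perp z w
      have h3 : ⟪w, J z w⟫ = 0 := by rw [real_inner_comm]; exact h2
      have hww : ⟪w,w⟫ = ‖w‖^2 := real_inner_self_eq_norm_sq w
      simp only [inner_add_left, inner_add_right, real_inner_smul_left, real_inner_smul_right]
      linear_combination s^2 * hww + h1 + s*h2 + s*h3
    have hnormsq : ∀ x : ↥WF, ‖(x:𝕍)‖^2 = ⟪(x:𝕍),v0⟫^2 + ⟪Q (x:𝕍), Q (x:𝕍)⟫ := by
      intro x
      have hx := hDEC (x:𝕍) x.2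
      have h := hexp ⟪(x:𝕍),v0⟫ (Q (x:𝕍)) v0
      rw [← hx] at h
      rw [← real_inner_self_eq_norm_sq, h, hv0]
      norm_num
    have hmnmu : ∀ x y : ↥WF, ‖mu x y‖ = ‖x‖ * ‖y‖ := by
      intro x y
      have hsq1 : ‖mu x y‖^2 = (‖x‖*‖y‖)^2 := by
        have hc : ‖mu x y‖ = ‖((mu x y : ↥WF) : 𝕍)‖ := rfl
        have h := hexp ⟪(x:𝕍),v0⟫ (Q (x:𝕍)) (y:𝕍)
        rw [hc, hcoe, ← real_inner_self_eq_norm_sq, h]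
        have h2 := hnormsq x
        have hx' : ‖x‖ = ‖(x:𝕍)‖ := rfl
        have hy' : ‖y‖ = ‖(y:𝕍)‖ := rfl
        rw [hx', hy', ← h2]
        ring
      have h1 := norm_nonneg (mu x y)
      have h2 : (0:ℝ) ≤ ‖x‖*‖y‖ := by positivity
      nlinarith [hsq1, h1, h2]
    have hfr := hz_hurwitz mu ⟨v0, hv0WF⟩ hv0 hId1 hId2 hmnmu
    rw [hdim] at hfr
    simp only [Set.mem_insert_iff, Set.mem_singleton_iff] at hfr ⊢
    omega
  · -- part 3 : irreducibility
    intro Wm hle hinvr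
    rcases eq_or_ne Wm ⊥ with hb | hb
    · exact Or.inl hb
    right
    obtain ⟨w, hwW, hw0⟩ := (Submodule.ne_bot_iff _).mp hb
    have hwWF := hle hwW
    rw [Submodule.mem_sup] at hwWF
    obtain ⟨p, hp, q, hq, hpq⟩ := hwWF
    obtain ⟨c, rfl⟩ := Submodule.mem_span_singleton.mp hp
    obtain ⟨u, rfl⟩ := hq
    have hJuw : J u w ∈ Wm := hinvr u ⟨w, hwW, rfl⟩
    have hflipu : (J.flip v) u = J u v := rfl
    have hcomb : c • w - J u w = (c^2 + ‖u‖^2) • v := by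
      rw [← hpq, hflipu]
      rw [map_add, map_smul]
      rw [hJsq u v]
      module
    have hcne : c^2 + ‖u‖^2 ≠ 0 := by
      intro h0
      have hc : c = 0 := by nlinarith [sq_nonneg c, sq_nonneg ‖u‖]
      have hu : ‖u‖ = 0 := by nlinarith [sq_nonneg c, sq_nonneg ‖u‖]
      apply hw0
      rw [← hpq, hc, zero_smul, hflipu, norm_eq_zero.mp hu]
      simp
    have hvW : v ∈ Wm := by
      have hmem : (c^2 + ‖u‖^2) • v ∈ Wm := by
        rw [← hcomb]; exact sub_mem (Wm.smul_mem c hwW) hJuw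
      have h2 := Wm.smul_mem (c^2+‖u‖^2)⁻¹ hmem
      rwa [inv_smul_smul₀ hcne] at h2
    apply le_antisymm hle
    apply sup_le
    · rwa [Submodule.span_singleton_le_iff_mem]
    · rintro x ⟨z, rfl⟩
      exact hinvr z ⟨v, hvW, rfl⟩
end

section
/- Every vector v ∈ 𝔳 satisfies the J²-condition if and only if the following holds: for all nonzero v₁, v₂ ∈ 𝔳, if the subspaces ℝv₁ + J_𝔷v₁ and ℝv₂ + J_𝔷v₂ of 𝔳 have a nonzero common element, then ℝv₁ + J_𝔷v₁ = ℝv₂ + J_𝔷v₂. (For Damek–Ricci spaces, either condition is equivalent to the space being symmetric.) -/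
open RealInnerProductSpace

/-- Every `v ∈ 𝔳` satisfies the `J²`-condition iff for all nonzero `v₁, v₂ ∈ 𝔳`, the
subspaces `ℝv₁ + J_𝔷v₁` and `ℝv₂ + J_𝔷v₂` either intersect trivially or coincide. -/
theorem stmt_7
    {𝕍 𝕫 : Type*} [NormedAddCommGroup 𝕍] [InnerProductSpace ℝ 𝕍] [FiniteDimensional ℝ 𝕍]
    [NormedAddCommGroup 𝕫] [InnerProductSpace ℝ 𝕫] [FiniteDimensional ℝ 𝕫]
    (J : 𝕫 →ₗ[ℝ] 𝕍 →ₗ[ℝ] 𝕍)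
    (hJsq : ∀ (z : 𝕫) (v : 𝕍), J z (J z v) = -(‖z‖ ^ 2) • v)
    (hJnorm : ∀ (z : 𝕫) (v : 𝕍), ‖J z v‖ = ‖z‖ * ‖v‖)
    (br : 𝕍 →ₗ[ℝ] 𝕍 →ₗ[ℝ] 𝕫)
    (hbr : ∀ (U V : 𝕍) (Z : 𝕫), ⟪br U V, Z⟫ = ⟪J Z U, V⟫) :
    (∀ v : 𝕍, ∀ z₁ z₂ : 𝕫, ⟪z₁, z₂⟫ = 0 → ∃ z₃ : 𝕫, J z₁ (J z₂ v) = J z₃ v) ↔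
      (∀ v₁ v₂ : 𝕍, v₁ ≠ 0 → v₂ ≠ 0 →
        (∃ w : 𝕍, w ≠ 0 ∧
            w ∈ ((ℝ ∙ v₁) ⊔ LinearMap.range (J.flip v₁)) ⊓
                ((ℝ ∙ v₂) ⊔ LinearMap.range (J.flip v₂))) →
        (ℝ ∙ v₁) ⊔ LinearMap.range (J.flip v₁) =
          (ℝ ∙ v₂) ⊔ LinearMap.range (J.flip v₂)) := by
  set S : 𝕍 → Submodule ℝ 𝕍 := fun v => (ℝ ∙ v) ⊔ LinearMap.range (J.flip v) with hS
  -- Polarization in the vector slot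
  have hA : ∀ (z : 𝕫) (u v : 𝕍), ⟪J z u, J z v⟫ = ‖z‖ ^ 2 * ⟪u, v⟫ := by
    intro z u v
    have e1 : ‖J z u + J z v‖ ^ 2 = ‖z‖ ^ 2 * ‖u + v‖ ^ 2 := by
      rw [← map_add, hJnorm]; ring
    rw [norm_add_sq_real, norm_add_sq_real u v, hJnorm, hJnorm] at e1
    nlinarith [e1]
  -- Skew-symmetry
  have hSkew : ∀ (z : 𝕫) (u v : 𝕍), ⟪J z u, v⟫ = -⟪u, J z v⟫ := by
    intro z u v
    rcases eq_or_ne z 0 with rfl | hz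
    · simp
    · have h1 := hA z u (J z v)
      rw [hJsq, inner_smul_right] at h1
      have hz2 : (‖z‖ : ℝ) ^ 2 ≠ 0 := pow_ne_zero 2 (norm_ne_zero_iff.mpr hz)
      have := mul_left_cancel₀ hz2 (by linarith [h1] : ‖z‖ ^ 2 * (-⟪u, J z v⟫) = ‖z‖ ^ 2 * ⟪J z u, v⟫)
      linarith [this]
  -- Polarization in the 𝕫 slot
  have hC : ∀ (z₁ z₂ : 𝕫) (v : 𝕍), ⟪J z₁ v, J z₂ v⟫ = ⟪z₁, z₂⟫ * ‖v‖ ^ 2 := by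
    intro z₁ z₂ v
    have e1 : ‖J z₁ v + J z₂ v‖ ^ 2 = ‖z₁ + z₂‖ ^ 2 * ‖v‖ ^ 2 := by
      have : J z₁ v + J z₂ v = J (z₁ + z₂) v := by rw [map_add]; rfl
      rw [this, hJnorm]; ring
    rw [norm_add_sq_real, norm_add_sq_real z₁ z₂, hJnorm, hJnorm] at e1
    nlinarith [e1]
  have hOrth : ∀ (z : 𝕫) (v : 𝕍), ⟪J z v, v⟫ = 0 := by
    intro z v
    have h1 := hSkew z v v
    have h2 : ⟪v, J z v⟫ = ⟪J z v, v⟫ := real_inner_comm _ _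
    linarith
  -- Injectivity of z ↦ J z v for v ≠ 0
  have hinj : ∀ v : 𝕍, v ≠ 0 → Function.Injective (J.flip v) := by
    intro v hv
    rw [injective_iff_map_eq_zero]
    intro z hz
    have : ‖J z v‖ = 0 := by rw [show J z v = 0 from hz]; simp
    rw [hJnorm] at this
    rcases mul_eq_zero.mp this with h | h
    · exact norm_eq_zero.mp h
    · exact absurd (norm_eq_zero.mp h) hv
  -- dimension of S v
  have hdim : ∀ v : 𝕍, v ≠ 0 → Module.finrank ℝ (S v) = 1 + Module.finrank ℝ 𝕫 := by
    intro v hv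
    have hbot : (ℝ ∙ v) ⊓ LinearMap.range (J.flip v) = ⊥ := by
      rw [Submodule.eq_bot_iff]
      rintro x ⟨hx1, hx2⟩
      obtain ⟨a, rfl⟩ := Submodule.mem_span_singleton.mp hx1
      obtain ⟨z, hz⟩ := hx2
      have h1 : ⟪J z v, v⟫ = 0 := hOrth z v
      rw [show J z v = a • v from hz] at h1
      rw [real_inner_smul_left, real_inner_self_eq_norm_sq] at h1
      have ha : a = 0 := by
        rcases mul_eq_zero.mp h1 with h | h
        · exact h
        · exact absurd (pow_eq_zero_iff (n := 2) (by norm_num) |>.mp h)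
            (norm_ne_zero_iff.mpr hv)
      rw [ha, zero_smul]
    have := Submodule.finrank_sup_add_finrank_inf_eq (ℝ ∙ v) (LinearMap.range (J.flip v))
    rw [hbot, finrank_bot, finrank_span_singleton hv,
      LinearMap.finrank_range_of_inj (hinj v hv)] at this
    simpa using this
  constructor
  · -- J² condition implies the intersection condition
    intro h v₁ v₂ hv₁ hv₂ ⟨w, hw0, hw⟩
    rw [Submodule.mem_inf] at hw
    have key : ∀ v w : 𝕍, v ≠ 0 → w ≠ 0 → w ∈ S v → S w = S v := by
      intro v w hv hw hwv
      have hle : S w ≤ S v := by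
        apply sup_le
        · rw [Submodule.span_le, Set.singleton_subset_iff]
          exact hwv
        · rintro x ⟨z', rfl⟩
          obtain ⟨p, hp, q, hq, hpq⟩ := Submodule.mem_sup.mp hwv
          obtain ⟨a, rfl⟩ := Submodule.mem_span_singleton.mp hp
          obtain ⟨z, rfl⟩ := hq
          have hx : (J.flip w) z' = a • J z' v + J z' (J z v) := by
            rw [← hpq]
            show J z' (a • v + J z v) = _
            rw [map_add, map_smul]
          rcases eq_or_ne z 0 with rfl | hz
          · rw [hx]
            simp only [map_zero, LinearMap.zero_apply, add_zero]
            exact Submodule.mem_sup_right ⟨a • z', by simp⟩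
          · set c : ℝ := ⟪z', z⟫ / ‖z‖ ^ 2 with hc
            have hz2 : (‖z‖ : ℝ) ^ 2 ≠ 0 := pow_ne_zero 2 (norm_ne_zero_iff.mpr hz)
            have hdecomp : z' = c • z + (z' - c • z) := by module
            have horth : ⟪z' - c • z, z⟫ = 0 := by
              rw [inner_sub_left, real_inner_smul_left, real_inner_self_eq_norm_sq, hc]
              field_simp
              ring
            obtain ⟨z₃, hz₃⟩ := h v (z' - c • z) z horth
            have hx2 : J z' (J z v) = (-(c * ‖z‖ ^ 2)) • v + J z₃ v := by
              conv_lhs => rw [hdecomp]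
              rw [map_add, map_smul, LinearMap.add_apply, LinearMap.smul_apply,
                hJsq, hz₃, smul_smul]
              ring_nf
            rw [hx, hx2]
            refine Submodule.add_mem _ (Submodule.mem_sup_right ⟨a • z', by simp⟩)
              (Submodule.add_mem _ ?_ (Submodule.mem_sup_right ⟨z₃, rfl⟩))
            exact Submodule.mem_sup_left (Submodule.smul_mem _ _
              (Submodule.mem_span_singleton_self v))
      exact Submodule.eq_of_le_of_finrank_le hle (by rw [hdim v hv, hdim w hw])
    rw [show (ℝ ∙ v₁) ⊔ LinearMap.range (J.flip v₁) = S v₁ from rfl,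
      show (ℝ ∙ v₂) ⊔ LinearMap.range (J.flip v₂) = S v₂ from rfl]
    rw [← key v₁ w hv₁ hw0 hw.1, ← key v₂ w hv₂ hw0 hw.2]
  · -- intersection condition implies J² condition
    intro h v z₁ z₂ hz12
    rcases eq_or_ne v 0 with rfl | hv
    · exact ⟨0, by simp⟩
    rcases eq_or_ne z₂ 0 with rfl | hz2
    · exact ⟨0, by simp⟩
    rcases eq_or_ne z₁ 0 with rfl | hz1
    · exact ⟨0, by simp⟩
    set w : 𝕍 := J z₂ v with hwdef
    have hw0 : w ≠ 0 := by
      intro hw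
      have : ‖J z₂ v‖ = 0 := by rw [← hwdef, hw, norm_zero]
      rw [hJnorm] at this
      rcases mul_eq_zero.mp this with h' | h'
      · exact hz2 (norm_eq_zero.mp h')
      · exact hv (norm_eq_zero.mp h')
    have hSeq : S w = S v := by
      apply h w v hw0 hv
      exact ⟨w, hw0, Submodule.mem_inf.mpr
        ⟨Submodule.mem_sup_left (Submodule.mem_span_singleton_self w),
         Submodule.mem_sup_right ⟨z₂, rfl⟩⟩⟩
    have hmem : J z₁ w ∈ S v := by
      rw [← hSeq]
      exact Submodule.mem_sup_right ⟨z₁, rfl⟩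
    obtain ⟨p, hp, q, hq, hpq⟩ := Submodule.mem_sup.mp hmem
    obtain ⟨a, rfl⟩ := Submodule.mem_span_singleton.mp hp
    obtain ⟨z, rfl⟩ := hq
    have hinner : ⟪J z₁ w, v⟫ = 0 := by
      have h1 : ⟪J z₁ w, v⟫ = -⟪w, J z₁ v⟫ := hSkew _ _ _
      have h2 : ⟪J z₂ v, J z₁ v⟫ = ⟪z₂, z₁⟫ * ‖v‖ ^ 2 := hC _ _ _
      have h3 : ⟪z₂, z₁⟫ = (0:ℝ) := by rw [real_inner_comm]; exact hz12
      rw [h1, hwdef, h2, h3]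
      ring
    have hinner2 : ⟪a • v + (J.flip v) z, v⟫ = a * ‖v‖ ^ 2 := by
      rw [inner_add_left, real_inner_smul_left, real_inner_self_eq_norm_sq]
      show a * ‖v‖ ^ 2 + ⟪J z v, v⟫ = _
      rw [hOrth]; ring
    rw [hpq] at hinner2
    have ha : a = 0 := by
      rw [hinner] at hinner2
      rcases mul_eq_zero.mp hinner2.symm with h' | h'
      · exact h'
      · exact absurd (pow_eq_zero_iff (n := 2) (by norm_num) |>.mp h')
          (norm_ne_zero_iff.mpr hv)
    refine ⟨z, ?_⟩
    rw [show J z₁ (J z₂ v) = J z₁ w from rfl, ← hpq, ha, zero_smul, zero_add]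
    rfl
end

section
/- Let p, q, s, θ be real numbers with p ≥ 0, q ≥ 0, p² + q² + s² = 1, and suppose χ(θ) := (1 − sθ)² + q²θ² ≠ 0. Set X = 2θ(1−sθ)p/χ(θ), Y = 2θ²qp/χ(θ), Z = 2θq/χ(θ), W = (1−θ²)/χ(θ). Then: (i) qX + sY − pZ = 0; (ii) (1 − p²/2)Y − spZ + pqW = pq; (iii) q(X² + Y²) − 2pY = 0; and (iv) if q = 0 then 4p²W + X² − (2p + sX)² = 0. (These identities show that a prolonged geodesic of a Damek–Ricci space with initial velocity (v,z,s), p = ‖v‖, q = ‖z‖, lies on an ellipse when z ≠ 0, and on a parabola with axis parallel to 𝔞 when z = 0 and v ≠ 0.) -/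
/-- Coordinate identities for the prolonged geodesic of a Damek–Ricci space:
with `p = ‖v‖`, `q = ‖z‖`, `p² + q² + s² = 1`, `χ(θ) = (1-sθ)² + q²θ² ≠ 0` and
`X, Y, Z, W` the coordinates of `γ(θ)`, one has
(i) `qX + sY - pZ = 0`; (ii) `(1 - p²/2)Y - spZ + pqW = pq`;
(iii) `q(X² + Y²) - 2pY = 0`; (iv) if `q = 0` then `4p²W + X² - (2p + sX)² = 0`. -/
theorem stmt_8 (p q s θ : ℝ) (hp : 0 ≤ p) (hq : 0 ≤ q)
    (hpqs : p ^ 2 + q ^ 2 + s ^ 2 = 1)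
    (hχ : (1 - s * θ) ^ 2 + q ^ 2 * θ ^ 2 ≠ 0)
    (X Y Z W : ℝ)
    (hX : X = 2 * θ * (1 - s * θ) * p / ((1 - s * θ) ^ 2 + q ^ 2 * θ ^ 2))
    (hY : Y = 2 * θ ^ 2 * q * p / ((1 - s * θ) ^ 2 + q ^ 2 * θ ^ 2))
    (hZ : Z = 2 * θ * q / ((1 - s * θ) ^ 2 + q ^ 2 * θ ^ 2))
    (hW : W = (1 - θ ^ 2) / ((1 - s * θ) ^ 2 + q ^ 2 * θ ^ 2)) :
    q * X + s * Y - p * Z = 0 ∧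
    (1 - p ^ 2 / 2) * Y - s * p * Z + p * q * W = p * q ∧
    q * (X ^ 2 + Y ^ 2) - 2 * p * Y = 0 ∧
    (q = 0 → 4 * p ^ 2 * W + X ^ 2 - (2 * p + s * X) ^ 2 = 0) := by
  subst hX hY hZ hW
  set c : ℝ := (1 - s * θ) ^ 2 + q ^ 2 * θ ^ 2 with hc
  refine ⟨?_, ?_, ?_, ?_⟩
  · field_simp
    ring
  · have h : (1 - p ^ 2 / 2) * (2 * θ ^ 2 * q * p / c) - s * p * (2 * θ * q / c)
        + p * q * ((1 - θ ^ 2) / c)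
        = ((1 - p ^ 2 / 2) * (2 * θ ^ 2 * q * p) - s * p * (2 * θ * q)
            + p * q * (1 - θ ^ 2)) / c := by ring
    rw [h, div_eq_iff hχ]
    linear_combination (-(p * q * θ ^ 2)) * hpqs
  · field_simp
    ring
  · intro hq0
    subst hq0
    have h1 : (1 - s * θ) ≠ 0 := by
      intro h; apply hχ; rw [hc, h]; ring
    rw [hc]
    simp only [zero_pow two_ne_zero, zero_mul, add_zero]
    field_simp [show (1 - θ * s) ≠ 0 by rwa [mul_comm]]
    ring
end

section
/- Let (v, z, s) ∈ 𝔳 × 𝔷 × ℝ with ‖v‖² + ‖z‖² + s² = 1 and s² + ‖z‖² ≠ 0. Then as θ → +∞ (along the filter atTop on ℝ), γ(θ) converges to the point (−(2s/(s²+‖z‖²))·v + (2/(s²+‖z‖²))·J_z(v), 0, −1/(s²+‖z‖²)) in 𝔳 × 𝔷 × ℝ. -/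
open RealInnerProductSpace Filter Topology

/-- Let `(v,z,s)` be a unit vector with `s² + ‖z‖² ≠ 0`. Then as `θ → +∞`, the
prolonged geodesic `γ(θ)` converges to the point
`(-(2s/(s²+‖z‖²)) v + (2/(s²+‖z‖²)) J_z v, 0, -1/(s²+‖z‖²))`. -/
theorem stmt_9
    {𝕍 𝕫 : Type*} [NormedAddCommGroup 𝕍] [InnerProductSpace ℝ 𝕍] [FiniteDimensional ℝ 𝕍]
    [NormedAddCommGroup 𝕫] [InnerProductSpace ℝ 𝕫] [FiniteDimensional ℝ 𝕫]
    (J : 𝕫 →ₗ[ℝ] 𝕍 →ₗ[ℝ] 𝕍)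
    (hJsq : ∀ (z : 𝕫) (v : 𝕍), J z (J z v) = -(‖z‖ ^ 2) • v)
    (hJnorm : ∀ (z : 𝕫) (v : 𝕍), ‖J z v‖ = ‖z‖ * ‖v‖)
    (v : 𝕍) (z : 𝕫) (s : ℝ)
    (hunit : ‖v‖ ^ 2 + ‖z‖ ^ 2 + s ^ 2 = 1)
    (hsz : s ^ 2 + ‖z‖ ^ 2 ≠ 0) :
    Tendsto
      (fun θ : ℝ =>
        (((2 * θ * (1 - s * θ) / ((1 - s * θ) ^ 2 + ‖z‖ ^ 2 * θ ^ 2)) • v +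
            (2 * θ ^ 2 / ((1 - s * θ) ^ 2 + ‖z‖ ^ 2 * θ ^ 2)) • J z v,
          (2 * θ / ((1 - s * θ) ^ 2 + ‖z‖ ^ 2 * θ ^ 2)) • z,
          (1 - θ ^ 2) / ((1 - s * θ) ^ 2 + ‖z‖ ^ 2 * θ ^ 2)) : 𝕍 × 𝕫 × ℝ))
      atTop
      (𝓝 ((-(2 * s / (s ^ 2 + ‖z‖ ^ 2))) • v + (2 / (s ^ 2 + ‖z‖ ^ 2)) • J z v,
        (0 : 𝕫), -1 / (s ^ 2 + ‖z‖ ^ 2))) := by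
  set w := ‖z‖ ^ 2 with hw
  set D : ℝ → ℝ := fun t => (t - s) ^ 2 + w with hD
  have hD0 : D 0 ≠ 0 := by
    have : D 0 = s ^ 2 + w := by simp [hD]
    rw [this]; exact hsz
  have hcD : ContinuousAt D 0 := by fun_prop
  have hinv : Tendsto (fun θ : ℝ => θ⁻¹) atTop (𝓝 0) := tendsto_inv_atTop_zero
  have hθne : ∀ᶠ θ : ℝ in atTop, θ ≠ 0 := eventually_ne_atTop 0
  -- generic scalar limit lemma
  have key : ∀ N : ℝ → ℝ, ContinuousAt N 0 →
      Tendsto (fun θ : ℝ => N θ⁻¹ / D θ⁻¹) atTop (𝓝 (N 0 / D 0)) := by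
    intro N hN
    exact Tendsto.comp (hN.div hcD hD0) hinv
  -- first coefficient
  have h1 : Tendsto (fun θ : ℝ => 2 * θ * (1 - s * θ) / ((1 - s * θ) ^ 2 + w * θ ^ 2))
      atTop (𝓝 (-(2 * s / (s ^ 2 + w)))) := by
    have := key (fun t => 2 * (t - s)) (by fun_prop)
    have hval : (2 : ℝ) * (0 - s) / D 0 = -(2 * s / (s ^ 2 + w)) := by
      simp only [hD]; rw [neg_div']; ring_nf
    rw [hval] at this
    refine this.congr' ?_
    filter_upwards [hθne] with θ hθ
    have hχ : (1 - s * θ) ^ 2 + w * θ ^ 2 = θ ^ 2 * D θ⁻¹ := by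
      simp only [hD]; field_simp
    have hnum : 2 * (θ⁻¹ - s) * θ ^ 2 = 2 * θ * (1 - s * θ) := by
      field_simp
    rw [hχ, ← hnum, mul_comm (θ ^ 2) (D θ⁻¹),
      mul_div_mul_right _ _ (pow_ne_zero 2 hθ)]
  -- second coefficient
  have h2 : Tendsto (fun θ : ℝ => 2 * θ ^ 2 / ((1 - s * θ) ^ 2 + w * θ ^ 2))
      atTop (𝓝 (2 / (s ^ 2 + w))) := by
    have := key (fun _ => 2) (by fun_prop)
    have hval : (2 : ℝ) / D 0 = 2 / (s ^ 2 + w) := by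
      simp only [hD]; ring_nf
    rw [hval] at this
    refine this.congr' ?_
    filter_upwards [hθne] with θ hθ
    have hχ : (1 - s * θ) ^ 2 + w * θ ^ 2 = θ ^ 2 * D θ⁻¹ := by
      simp only [hD]; field_simp
    have hnum : (2 : ℝ) * θ ^ 2 = 2 * θ ^ 2 := rfl
    rw [hχ, mul_comm (θ ^ 2) (D θ⁻¹)]
    rw [show (2 : ℝ) * θ ^ 2 = 2 * θ ^ 2 from rfl,
      mul_div_mul_right _ _ (pow_ne_zero 2 hθ)]
  -- third coefficient
  have h3 : Tendsto (fun θ : ℝ => 2 * θ / ((1 - s * θ) ^ 2 + w * θ ^ 2))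
      atTop (𝓝 0) := by
    have := key (fun t => 2 * t) (by fun_prop)
    have hval : (2 : ℝ) * 0 / D 0 = 0 := by simp
    rw [hval] at this
    refine this.congr' ?_
    filter_upwards [hθne] with θ hθ
    have hχ : (1 - s * θ) ^ 2 + w * θ ^ 2 = θ ^ 2 * D θ⁻¹ := by
      simp only [hD]; field_simp
    have hnum : 2 * θ⁻¹ * θ ^ 2 = 2 * θ := by field_simp
    rw [hχ, ← hnum, mul_comm (θ ^ 2) (D θ⁻¹),
      mul_div_mul_right _ _ (pow_ne_zero 2 hθ)]
  -- fourth coefficient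
  have h4 : Tendsto (fun θ : ℝ => (1 - θ ^ 2) / ((1 - s * θ) ^ 2 + w * θ ^ 2))
      atTop (𝓝 (-1 / (s ^ 2 + w))) := by
    have := key (fun t => t ^ 2 - 1) (by fun_prop)
    have hval : ((0 : ℝ) ^ 2 - 1) / D 0 = -1 / (s ^ 2 + w) := by
      simp only [hD]; norm_num
    rw [hval] at this
    refine this.congr' ?_
    filter_upwards [hθne] with θ hθ
    have hχ : (1 - s * θ) ^ 2 + w * θ ^ 2 = θ ^ 2 * D θ⁻¹ := by
      simp only [hD]; field_simp
    have hnum : ((θ⁻¹) ^ 2 - 1) * θ ^ 2 = 1 - θ ^ 2 := by field_simp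
    rw [hχ, ← hnum, mul_comm (θ ^ 2) (D θ⁻¹),
      mul_div_mul_right _ _ (pow_ne_zero 2 hθ)]
  -- combine
  have hz0 : Tendsto (fun θ : ℝ => (2 * θ / ((1 - s * θ) ^ 2 + w * θ ^ 2)) • z)
      atTop (𝓝 (0 : 𝕫)) := by
    have := h3.smul_const z
    simpa using this
  exact ((h1.smul_const v).add (h2.smul_const (J z v))).prodMk_nhds
    (hz0.prodMk_nhds h4)
end

section
/- Fix x₀ = (V₀, Z₀, t₀) ∈ 𝔳 × 𝔷 × ℝ. For every (V, Z, t) ∈ 𝔳 × 𝔷 × ℝ with t > 0, setting K = t + t₀ + ‖(V−V₀)/2‖², W = Z − Z₀ + ½[V, V₀], and D = (K² + ‖W‖²)/t, one has (1/t)·‖K·(V−V₀) + J_W(V−V₀)‖² + 4‖W‖² + (2K − D)² = D² − 4t₀·D. (This identity states that the squared norm of the gradient of the distorted distance function D_{x₀} with respect to the left-invariant Damek–Ricci metric, computed in the left-invariant orthonormal frame, equals D_{x₀}² − 4t₀·D_{x₀}; it is the transnormality part of the theorem that D_{x₀} is an isoparametric function for every x₀.) -/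
open RealInnerProductSpace

/-- Transnormality identity for the distorted distance function `D_{x₀}` of a
Damek–Ricci space: with `K = t + t₀ + ‖(V-V₀)/2‖²`, `W = Z - Z₀ + ½[V,V₀]` and
`D = (K² + ‖W‖²)/t`, one has
`(1/t) ‖K (V-V₀) + J_W (V-V₀)‖² + 4‖W‖² + (2K - D)² = D² - 4 t₀ D`,
i.e. `‖∇ D_{x₀}‖² = D_{x₀}² - 4 t₀ D_{x₀}`. -/
theorem stmt_10
    {𝕍 𝕫 : Type*} [NormedAddCommGroup 𝕍] [InnerProductSpace ℝ 𝕍] [FiniteDimensional ℝ 𝕍]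
    [NormedAddCommGroup 𝕫] [InnerProductSpace ℝ 𝕫] [FiniteDimensional ℝ 𝕫]
    (J : 𝕫 →ₗ[ℝ] 𝕍 →ₗ[ℝ] 𝕍)
    (hJsq : ∀ (z : 𝕫) (v : 𝕍), J z (J z v) = -(‖z‖ ^ 2) • v)
    (hJnorm : ∀ (z : 𝕫) (v : 𝕍), ‖J z v‖ = ‖z‖ * ‖v‖)
    (br : 𝕍 →ₗ[ℝ] 𝕍 →ₗ[ℝ] 𝕫)
    (hbr : ∀ (U V : 𝕍) (Z : 𝕫), ⟪br U V, Z⟫ = ⟪J Z U, V⟫)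
    (V₀ V : 𝕍) (Z₀ Z : 𝕫) (t₀ t : ℝ) (ht : 0 < t)
    (K D : ℝ) (W : 𝕫)
    (hK : K = t + t₀ + ‖(1 / 2 : ℝ) • (V - V₀)‖ ^ 2)
    (hW : W = Z - Z₀ + (1 / 2 : ℝ) • br V V₀)
    (hD : D = (K ^ 2 + ‖W‖ ^ 2) / t) :
    (1 / t) * ‖K • (V - V₀) + J W (V - V₀)‖ ^ 2 + 4 * ‖W‖ ^ 2 + (2 * K - D) ^ 2 =
      D ^ 2 - 4 * t₀ * D := by
  set U : 𝕍 := V - V₀ with hU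
  -- J_z preserves inner products up to ‖z‖²
  have horth : ∀ (z : 𝕫) (u v : 𝕍), ⟪J z u, J z v⟫ = ‖z‖ ^ 2 * ⟪u, v⟫ := by
    intro z u v
    have h1 : ‖J z (u + v)‖ ^ 2 = ‖z‖ ^ 2 * ‖u + v‖ ^ 2 := by
      rw [hJnorm]; ring
    have h2 : ‖J z u‖ ^ 2 = ‖z‖ ^ 2 * ‖u‖ ^ 2 := by rw [hJnorm]; ring
    have h3 : ‖J z v‖ ^ 2 = ‖z‖ ^ 2 * ‖v‖ ^ 2 := by rw [hJnorm]; ring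
    rw [map_add, norm_add_sq_real, norm_add_sq_real, h2, h3] at h1
    nlinarith [h1]
  -- skew-symmetry consequence
  have hskew : ∀ (z : 𝕫) (u : 𝕍), ⟪J z u, u⟫ = 0 := by
    intro z u
    by_cases hz : z = 0
    · have : ‖J z u‖ = 0 := by rw [hJnorm, hz]; simp
      have : J z u = 0 := norm_eq_zero.mp this
      rw [this, inner_zero_left]
    · have h := horth z u (J z u)
      rw [hJsq] at h
      rw [real_inner_smul_right] at h
      have hc : ⟪u, J z u⟫ = ⟪J z u, u⟫ := real_inner_comm _ _
      have hzn : (0:ℝ) < ‖z‖ ^ 2 := pow_pos (norm_pos_iff.mpr hz) 2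
      nlinarith [h, hc]
  -- expansion of the gradient norm
  have expand : ‖K • U + J W U‖ ^ 2 = (K ^ 2 + ‖W‖ ^ 2) * ‖U‖ ^ 2 := by
    rw [norm_add_sq_real, real_inner_smul_left, real_inner_comm, hskew, norm_smul,
      hJnorm]
    have : |K| ^ 2 = K ^ 2 := sq_abs K
    rw [Real.norm_eq_abs]
    nlinarith [this]
  have hnormU : ‖U‖ ^ 2 = 4 * (K - t - t₀) := by
    rw [hK, norm_smul, Real.norm_eq_abs]
    have : |(1/2 : ℝ)| = 1/2 := by norm_num
    rw [this]; ring
  have ht' : t ≠ 0 := ne_of_gt ht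
  have hDt : D * t = K ^ 2 + ‖W‖ ^ 2 := by
    rw [hD]; field_simp
  rw [expand, hnormU]
  have : D ^ 2 - 4 * t₀ * D - ((1 / t) * ((K ^ 2 + ‖W‖ ^ 2) * (4 * (K - t - t₀))) + 4 * ‖W‖ ^ 2 + (2 * K - D) ^ 2) = 0 := by
    field_simp
    nlinarith [hDt]
  linarith [this]
end

section
/- For every p = (V̄, Z̄, t̄) ∈ 𝔳 × 𝔷 × (0,∞), every x₀ = (V₀, Z₀, t₀) ∈ 𝔳 × 𝔷 × ℝ, and every (V, Z, t) ∈ 𝔳 × 𝔷 × (0,∞), one has D_{x₀}(L_p(V, Z, t)) = t̄ · D_{x₀'}(V, Z, t), where x₀' = L_{p⁻¹}(x₀) = ((V₀−V̄)/√t̄, (Z₀−Z̄)/t̄ − (1/(2t̄))·[V̄, V₀], t₀/t̄). In particular, left translations permute the focal varieties: L_p({D_{x₀} = 0}) = {D_{L_p(x₀)} = 0}. -/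
open RealInnerProductSpace

section

variable {𝕍 𝕫 : Type*} [NormedAddCommGroup 𝕍] [InnerProductSpace ℝ 𝕍] [FiniteDimensional ℝ 𝕍]
  [NormedAddCommGroup 𝕫] [InnerProductSpace ℝ 𝕫] [FiniteDimensional ℝ 𝕫]

/-- The distorted distance function `D_{x₀}(V,Z,t)
  = (1/t)((t + t₀ + ‖(V-V₀)/2‖²)² + ‖Z - Z₀ + ½[V,V₀]‖²)`. -/
noncomputable def distD (br : 𝕍 →ₗ[ℝ] 𝕍 →ₗ[ℝ] 𝕫) (x₀ x : 𝕍 × 𝕫 × ℝ) : ℝ :=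
  (1 / x.2.2) *
    ((x.2.2 + x₀.2.2 + ‖(1 / 2 : ℝ) • (x.1 - x₀.1)‖ ^ 2) ^ 2 +
      ‖x.2.1 - x₀.2.1 + (1 / 2 : ℝ) • br x.1 x₀.1‖ ^ 2)

/-- The left translation by `p = (V̄, Z̄, t̄)`:
`L_p(V,Z,t) = (V̄ + √t̄ V, Z̄ + t̄ Z + ½√t̄ [V̄,V], t̄ t)`. -/
noncomputable def leftT (br : 𝕍 →ₗ[ℝ] 𝕍 →ₗ[ℝ] 𝕫) (p x : 𝕍 × 𝕫 × ℝ) : 𝕍 × 𝕫 × ℝ :=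
  (p.1 + Real.sqrt p.2.2 • x.1,
   p.2.1 + p.2.2 • x.2.1 + ((1 / 2 : ℝ) * Real.sqrt p.2.2) • br p.1 x.1,
   p.2.2 * x.2.2)

lemma br_antisymm
    (J : 𝕫 →ₗ[ℝ] 𝕍 →ₗ[ℝ] 𝕍)
    (hJsq : ∀ (z : 𝕫) (v : 𝕍), J z (J z v) = -(‖z‖ ^ 2) • v)
    (hJnorm : ∀ (z : 𝕫) (v : 𝕍), ‖J z v‖ = ‖z‖ * ‖v‖)
    (br : 𝕍 →ₗ[ℝ] 𝕍 →ₗ[ℝ] 𝕫)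
    (hbr : ∀ (U V : 𝕍) (Z : 𝕫), ⟪br U V, Z⟫ = ⟪J Z U, V⟫)
    (U V : 𝕍) : br V U = - br U V := by
  have hinnerJ : ∀ (z : 𝕫) (u v : 𝕍), ⟪J z u, J z v⟫ = ‖z‖ ^ 2 * ⟪u, v⟫ := by
    intro z u v
    have h1 := hJnorm z u
    have h2 := hJnorm z v
    have h3 := hJnorm z (u + v)
    rw [real_inner_eq_norm_add_mul_self_sub_norm_mul_self_sub_norm_mul_self_div_two,
      real_inner_eq_norm_add_mul_self_sub_norm_mul_self_sub_norm_mul_self_div_two u v,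
      ← (J z).map_add, h1, h2, h3]
    ring
  have hskew : ∀ (z : 𝕫) (u v : 𝕍), ⟪J z u, v⟫ = -⟪u, J z v⟫ := by
    intro z u v
    rcases eq_or_ne z 0 with rfl | hz
    · simp
    · have hz2 : (‖z‖ : ℝ) ^ 2 ≠ 0 := pow_ne_zero 2 (norm_ne_zero_iff.mpr hz)
      have h1 : ⟪J z u, J z (J z v)⟫ = ‖z‖ ^ 2 * ⟪u, J z v⟫ := hinnerJ z u (J z v)
      rw [hJsq z v, inner_smul_right] at h1
      have h2 : ‖z‖ ^ 2 * ⟪J z u, v⟫ = ‖z‖ ^ 2 * (-⟪u, J z v⟫) := by linarith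
      have h3 := mul_left_cancel₀ hz2 h2
      linarith
  apply ext_inner_right ℝ
  intro Z
  rw [hbr, inner_neg_left, hbr, hskew, real_inner_comm]

lemma key_scaling
    (br : 𝕍 →ₗ[ℝ] 𝕍 →ₗ[ℝ] 𝕫)
    (hanti : ∀ (U V : 𝕍), br V U = - br U V)
    (Vb : 𝕍) (Zb : 𝕫) (tb : ℝ) (htb : 0 < tb)
    (V₀ : 𝕍) (Z₀ : 𝕫) (t₀ : ℝ)
    (x : 𝕍 × 𝕫 × ℝ) (hx : 0 < x.2.2) :
    distD br (V₀, Z₀, t₀) (leftT br (Vb, Zb, tb) x) =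
      tb * distD br ((Real.sqrt tb)⁻¹ • (V₀ - Vb),
        tb⁻¹ • (Z₀ - Zb) - (1 / (2 * tb)) • br Vb V₀, t₀ / tb) x := by
  obtain ⟨V, Z, t⟩ := x
  simp only at hx
  have hs : 0 < Real.sqrt tb := Real.sqrt_pos.mpr htb
  have hs2 : Real.sqrt tb ^ 2 = tb := Real.sq_sqrt htb.le
  set s := Real.sqrt tb with hs_def
  clear_value s
  clear hs_def
  subst hs2
  simp only [distD, leftT]
  simp only [Real.sqrt_sq hs.le]
  have hA : s ^ 2 * t + t₀ + ‖(1 / 2 : ℝ) • (Vb + s • V - V₀)‖ ^ 2 =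
      s ^ 2 * (t + t₀ / s ^ 2 + ‖(1 / 2 : ℝ) • (V - (s)⁻¹ • (V₀ - Vb))‖ ^ 2) := by
    have hv : s • ((1 / 2 : ℝ) • (V - (s)⁻¹ • (V₀ - Vb))) = (1 / 2 : ℝ) • (Vb + s • V - V₀) := by
      match_scalars <;> field_simp <;> ring
    have hn : s ^ 2 * ‖(1 / 2 : ℝ) • (V - (s)⁻¹ • (V₀ - Vb))‖ ^ 2 =
        ‖(1 / 2 : ℝ) • (Vb + s • V - V₀)‖ ^ 2 := by
      rw [← hv, norm_smul s, Real.norm_eq_abs, abs_of_pos hs, mul_pow]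
    rw [mul_add, mul_add, hn]
    field_simp
  have hB : (s ^ 2) • (Z - ((s ^ 2)⁻¹ • (Z₀ - Zb) - (1 / (2 * s ^ 2)) • br Vb V₀) +
        (1 / 2 : ℝ) • br V ((s)⁻¹ • (V₀ - Vb))) =
      Zb + (s ^ 2) • Z + ((1 / 2 : ℝ) * s) • br Vb V - Z₀ + (1 / 2 : ℝ) • br (Vb + s • V) V₀ := by
    have h1 : br V ((s)⁻¹ • (V₀ - Vb)) = (s)⁻¹ • br V V₀ - (s)⁻¹ • br V Vb := by
      simp [map_sub, smul_sub]
    have h2 : br (Vb + s • V) V₀ = br Vb V₀ + s • br V V₀ := by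
      simp [map_add, LinearMap.add_apply]
    have h3 : br V Vb = - br Vb V := hanti Vb V
    rw [h1, h2, h3]
    match_scalars <;> field_simp <;> ring
  rw [hA]
  have hnorm : ‖Zb + (s ^ 2) • Z + ((1 / 2 : ℝ) * s) • br Vb V - Z₀ +
        (1 / 2 : ℝ) • br (Vb + s • V) V₀‖ ^ 2
      = (s ^ 2) ^ 2 * ‖Z - ((s ^ 2)⁻¹ • (Z₀ - Zb) - (1 / (2 * s ^ 2)) • br Vb V₀) +
        (1 / 2 : ℝ) • br V ((s)⁻¹ • (V₀ - Vb))‖ ^ 2 := by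
    rw [← hB, norm_smul (s^2), Real.norm_eq_abs, abs_of_pos (by positivity : (0:ℝ) < s ^ 2), mul_pow]
  rw [hnorm]
  field_simp

/-- `D_{x₀} ∘ L_p = t̄ · D_{L_{p⁻¹}(x₀)}`, where
`L_{p⁻¹}(x₀) = ((V₀-V̄)/√t̄, (Z₀-Z̄)/t̄ - (1/(2t̄))[V̄,V₀], t₀/t̄)`; in particular left
translations permute the focal varieties: `L_p({D_{x₀} = 0}) = {D_{L_p(x₀)} = 0}`. -/
theorem stmt_11
    (J : 𝕫 →ₗ[ℝ] 𝕍 →ₗ[ℝ] 𝕍)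
    (hJsq : ∀ (z : 𝕫) (v : 𝕍), J z (J z v) = -(‖z‖ ^ 2) • v)
    (hJnorm : ∀ (z : 𝕫) (v : 𝕍), ‖J z v‖ = ‖z‖ * ‖v‖)
    (br : 𝕍 →ₗ[ℝ] 𝕍 →ₗ[ℝ] 𝕫)
    (hbr : ∀ (U V : 𝕍) (Z : 𝕫), ⟪br U V, Z⟫ = ⟪J Z U, V⟫)
    (Vb : 𝕍) (Zb : 𝕫) (tb : ℝ) (htb : 0 < tb)
    (V₀ : 𝕍) (Z₀ : 𝕫) (t₀ : ℝ) :
    leftT br (-(Real.sqrt tb)⁻¹ • Vb, -tb⁻¹ • Zb, tb⁻¹) (V₀, Z₀, t₀) =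
      ((Real.sqrt tb)⁻¹ • (V₀ - Vb),
        tb⁻¹ • (Z₀ - Zb) - (1 / (2 * tb)) • br Vb V₀, t₀ / tb) ∧
    (∀ x : 𝕍 × 𝕫 × ℝ, 0 < x.2.2 →
      distD br (V₀, Z₀, t₀) (leftT br (Vb, Zb, tb) x) =
        tb * distD br ((Real.sqrt tb)⁻¹ • (V₀ - Vb),
          tb⁻¹ • (Z₀ - Zb) - (1 / (2 * tb)) • br Vb V₀, t₀ / tb) x) ∧
    leftT br (Vb, Zb, tb) '' {x : 𝕍 × 𝕫 × ℝ | 0 < x.2.2 ∧ distD br (V₀, Z₀, t₀) x = 0} =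
      {x : 𝕍 × 𝕫 × ℝ | 0 < x.2.2 ∧ distD br (leftT br (Vb, Zb, tb) (V₀, Z₀, t₀)) x = 0} := by
  have hanti := br_antisymm J hJsq hJnorm br hbr
  have h0 : br Vb Vb = 0 := by
    have h := hanti Vb Vb
    have h2 : (2 : ℝ) • br Vb Vb = 0 := by
      rw [two_smul]; nth_rewrite 1 [h]; abel
    simpa using (smul_eq_zero.mp h2)
  have hs : 0 < Real.sqrt tb := Real.sqrt_pos.mpr htb
  have hs2 : Real.sqrt tb ^ 2 = tb := Real.sq_sqrt htb.le
  set s := Real.sqrt tb with hs_def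
  clear_value s
  clear hs_def
  subst hs2
  have hsne : s ≠ 0 := hs.ne'
  have hperm : ∀ x : 𝕍 × 𝕫 × ℝ, 0 < x.2.2 →
      distD br (leftT br (Vb, Zb, s ^ 2) (V₀, Z₀, t₀)) (leftT br (Vb, Zb, s ^ 2) x) =
        s ^ 2 * distD br (V₀, Z₀, t₀) x := by
    intro x hx
    have h := key_scaling br hanti Vb Zb (s ^ 2) htb (Vb + s • V₀)
      (Zb + (s ^ 2) • Z₀ + ((1 / 2 : ℝ) * s) • br Vb V₀) (s ^ 2 * t₀) x hx
    rw [Real.sqrt_sq hs.le] at h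
    have e1 : s⁻¹ • (Vb + s • V₀ - Vb) = V₀ := by
      match_scalars <;> field_simp <;> ring
    have e2 : (s ^ 2)⁻¹ • (Zb + (s ^ 2) • Z₀ + ((1 / 2 : ℝ) * s) • br Vb V₀ - Zb) -
        (1 / (2 * s ^ 2)) • br Vb (Vb + s • V₀) = Z₀ := by
      have hb : br Vb (Vb + s • V₀) = s • br Vb V₀ := by
        simp [map_add, map_smul, h0]
      rw [hb]
      match_scalars <;> field_simp <;> ring
    have e3 : s ^ 2 * t₀ / s ^ 2 = t₀ := by field_simp
    rw [e1, e2, e3] at h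
    have hLp : leftT br (Vb, Zb, s ^ 2) (V₀, Z₀, t₀) =
        (Vb + s • V₀, Zb + (s ^ 2) • Z₀ + ((1 / 2 : ℝ) * s) • br Vb V₀, s ^ 2 * t₀) := by
      simp only [leftT, Real.sqrt_sq hs.le]
    rw [hLp]
    exact h
  refine ⟨?_, ?_, ?_⟩
  · simp only [leftT, Real.sqrt_inv, Real.sqrt_sq hs.le, Prod.mk.injEq]
    refine ⟨?_, ?_, ?_⟩
    · match_scalars <;> ring
    · have hb : br (-s⁻¹ • Vb) V₀ = -s⁻¹ • br Vb V₀ := by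
        simp [map_smul]
      rw [hb]
      match_scalars <;> field_simp <;> ring
    · field_simp
  · intro x hx
    have h := key_scaling br hanti Vb Zb (s ^ 2) htb V₀ Z₀ t₀ x hx
    rw [Real.sqrt_sq hs.le] at h
    exact h
  · ext y
    simp only [Set.mem_image, Set.mem_setOf_eq]
    constructor
    · rintro ⟨x, ⟨hx1, hx2⟩, rfl⟩
      refine ⟨mul_pos htb hx1, ?_⟩
      rw [hperm x hx1, hx2, mul_zero]
    · rintro ⟨hy1, hy2⟩
      set x : 𝕍 × 𝕫 × ℝ := (s⁻¹ • (y.1 - Vb),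
        (s ^ 2)⁻¹ • (y.2.1 - Zb) - (1 / (2 * s ^ 2)) • br Vb y.1,
        (s ^ 2)⁻¹ * y.2.2) with hx_def
      have hx1 : 0 < x.2.2 := mul_pos (inv_pos.mpr htb) hy1
      have hLR : leftT br (Vb, Zb, s ^ 2) x = y := by
        rw [hx_def]
        simp only [leftT, Real.sqrt_sq hs.le]
        have hb : br Vb (s⁻¹ • (y.1 - Vb)) = s⁻¹ • br Vb y.1 := by
          simp [map_sub, map_smul, smul_sub, h0]
        rw [hb]
        have c1 : Vb + s • (s⁻¹ • (y.1 - Vb)) = y.1 := by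
          match_scalars <;> field_simp <;> ring
        have c2 : Zb + (s ^ 2) • ((s ^ 2)⁻¹ • (y.2.1 - Zb) - (1 / (2 * s ^ 2)) • br Vb y.1) +
            ((1 / 2 : ℝ) * s) • (s⁻¹ • br Vb y.1) = y.2.1 := by
          match_scalars <;> field_simp <;> ring
        have c3 : s ^ 2 * ((s ^ 2)⁻¹ * y.2.2) = y.2.2 := by field_simp
        rw [c1, c2, c3]
      have h := hperm x hx1
      rw [hLR, hy2] at h
      have hd : distD br (V₀, Z₀, t₀) x = 0 := by
        have := (mul_eq_zero.mp h.symm).resolve_left (by positivity)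
        exact this
      exact ⟨x, ⟨hx1, hd⟩, hLR⟩

end
end

section
/- Let (v, 0, s) ∈ 𝔳 × 𝔷 × ℝ be a unit vector whose 𝔷-component is 0, with s ≠ 0, let p = (V̄, Z̄, t̄) ∈ 𝔳 × 𝔷 × (0,∞), and let η(θ) = L_p(γ(θ)), where γ is the prolonged geodesic with data (v, 0, s). Then for every fixed point (V, Z, t) ∈ 𝔳 × 𝔷 × (0,∞), the function θ ↦ (1/θ − s)² · D_{η(θ)}(V, Z, t) converges, as θ → 1/s with θ ≠ 1/s (punctured neighborhood filter), to (t̄/t)·((2s√t̄ − ⟨V − V̄, v⟩)² + ‖[V − V̄, v]‖²), which equals t̄ times the limiting isoparametric function D_⊛^η(V, Z, t) = (1/t)·((2s√t̄ − ⟨V−V̄, v⟩)² + ‖[V−V̄, v]‖²). -/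
open RealInnerProductSpace Filter Topology

section

variable {𝕍 𝕫 : Type*} [NormedAddCommGroup 𝕍] [InnerProductSpace ℝ 𝕍] [FiniteDimensional ℝ 𝕍]
  [NormedAddCommGroup 𝕫] [InnerProductSpace ℝ 𝕫] [FiniteDimensional ℝ 𝕫]

private lemma sq_smul_aux {E : Type*} [NormedAddCommGroup E] [InnerProductSpace ℝ E]
    (a ti X F : ℝ) (Y G : E) (eX : a * X = F) (eY : a • Y = G) :
    ti * (F ^ 2 + ‖G‖ ^ 2) = a ^ 2 * (ti * (X ^ 2 + ‖Y‖ ^ 2)) := by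
  subst eX eY
  rw [norm_smul, Real.norm_eq_abs, mul_pow, mul_pow, sq_abs]
  ring

/-- Let `(v, 0, s)` be a unit vector with `s ≠ 0`, `p = (V̄, Z̄, t̄)` with `t̄ > 0`, and
`η = L_p ∘ γ` the translated prolonged geodesic (here `χ(θ) = (1-sθ)²` since `z = 0`).
Then for every `(V,Z,t)` with `t > 0`, `(1/θ - s)² D_{η(θ)}(V,Z,t)` converges, as
`θ → 1/s`, `θ ≠ 1/s`, to `(t̄/t)((2s√t̄ - ⟨V-V̄, v⟩)² + ‖[V-V̄, v]‖²)`, which equals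
`t̄ · D_⊛^η(V,Z,t)`. -/
theorem stmt_12
    (J : 𝕫 →ₗ[ℝ] 𝕍 →ₗ[ℝ] 𝕍)
    (hJsq : ∀ (z : 𝕫) (v : 𝕍), J z (J z v) = -(‖z‖ ^ 2) • v)
    (hJnorm : ∀ (z : 𝕫) (v : 𝕍), ‖J z v‖ = ‖z‖ * ‖v‖)
    (br : 𝕍 →ₗ[ℝ] 𝕍 →ₗ[ℝ] 𝕫)
    (hbr : ∀ (U V : 𝕍) (Z : 𝕫), ⟪br U V, Z⟫ = ⟪J Z U, V⟫)
    (v : 𝕍) (s : ℝ) (hunit : ‖v‖ ^ 2 + ‖(0 : 𝕫)‖ ^ 2 + s ^ 2 = 1) (hs : s ≠ 0)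
    (Vb : 𝕍) (Zb : 𝕫) (tb : ℝ) (htb : 0 < tb)
    (V : 𝕍) (Z : 𝕫) (t : ℝ) (ht : 0 < t) :
    Tendsto
      (fun θ : ℝ =>
        (1 / θ - s) ^ 2 *
          distD br
            (leftT br (Vb, Zb, tb)
              ((2 * θ * (1 - s * θ) / (1 - s * θ) ^ 2) • v +
                  (2 * θ ^ 2 / (1 - s * θ) ^ 2) • J 0 v,
                (2 * θ / (1 - s * θ) ^ 2) • (0 : 𝕫),
                (1 - θ ^ 2) / (1 - s * θ) ^ 2))
            (V, Z, t))
      (𝓝[≠] (1 / s))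
      (𝓝 ((tb / t) *
        ((2 * s * Real.sqrt tb - ⟪V - Vb, v⟫) ^ 2 + ‖br (V - Vb) v‖ ^ 2))) ∧
    (tb / t) * ((2 * s * Real.sqrt tb - ⟪V - Vb, v⟫) ^ 2 + ‖br (V - Vb) v‖ ^ 2) =
      tb * ((1 / t) *
        ((2 * s * Real.sqrt tb - ⟪V - Vb, v⟫) ^ 2 + ‖br (V - Vb) v‖ ^ 2)) := by
  refine ⟨?_, by ring⟩
  have h0 : (1:ℝ)/s ≠ 0 := one_div_ne_zero hs
  have hc2 : tb = Real.sqrt tb ^ 2 := (Real.sq_sqrt htb.le).symm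
  set c := Real.sqrt tb with hcdef
  have hcpos : 0 < c := Real.sqrt_pos.mpr htb
  have hv : ‖v‖ ^ 2 = 1 - s ^ 2 := by
    have h := hunit
    rw [norm_zero] at h
    nlinarith [h]
  rw [hc2]
  have htend : Tendsto (fun θ : ℝ =>
      (1/t)*((((1 - s*θ)/θ) * (t + ‖V - Vb‖^2/4) + c^2*((1+s*θ)/θ) - c*⟪V - Vb,v⟫)^2
      + ‖((1-s*θ)/θ) • (Z - Zb + (1/2:ℝ) • br V Vb) + c • (br V v - br Vb v)‖^2))
      (𝓝[≠] (1/s))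
      (𝓝 ((c^2 / t) * ((2 * s * c - ⟪V - Vb, v⟫) ^ 2 + ‖br (V - Vb) v‖ ^ 2))) := by
    have hd : ContinuousAt (fun θ : ℝ => (1 - s*θ)/θ) (1/s) :=
      ContinuousAt.div (by fun_prop) continuousAt_id h0
    have hd2 : ContinuousAt (fun θ : ℝ => (1 + s*θ)/θ) (1/s) :=
      ContinuousAt.div (by fun_prop) continuousAt_id h0
    have hcont : ContinuousAt (fun θ : ℝ =>
        (1/t)*((((1 - s*θ)/θ) * (t + ‖V - Vb‖^2/4) + c^2*((1+s*θ)/θ) - c*⟪V - Vb,v⟫)^2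
        + ‖((1-s*θ)/θ) • (Z - Zb + (1/2:ℝ) • br V Vb) + c • (br V v - br Vb v)‖^2)) (1/s) :=
      continuousAt_const.mul
        ((((hd.mul continuousAt_const).add (continuousAt_const.mul hd2)).sub
            continuousAt_const).pow 2 |>.add
          (((hd.smul continuousAt_const).add continuousAt_const).norm.pow 2))
    have hten := hcont.tendsto.mono_left (nhdsWithin_le_nhds (s := {(1:ℝ)/s}ᶜ))
    convert hten using 2
    have hss : s * (1/s) = 1 := mul_one_div_cancel hs
    have h1 : (1 - s*(1/s))/(1/s) = 0 := by rw [hss, sub_self, zero_div]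
    have h2 : (1 + s*(1/s))/(1/s) = 2*s := by rw [hss, one_add_one_eq_two]; field_simp
    rw [h1, h2]
    simp only [zero_mul, zero_add, zero_smul, map_sub, LinearMap.sub_apply, norm_smul,
      Real.norm_eq_abs, abs_of_pos hcpos, mul_pow]
    ring
  refine Tendsto.congr' ?_ htend
  have e1 : ∀ᶠ θ in 𝓝[≠] ((1:ℝ)/s), θ ≠ 0 :=
    (eventually_ne_nhds h0).filter_mono nhdsWithin_le_nhds
  have e2 : ∀ᶠ θ in 𝓝[≠] ((1:ℝ)/s), θ ≠ 1/s := eventually_mem_nhdsWithin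
  filter_upwards [e1, e2] with θ hθ0 hθ1
  have hu : 1 - s * θ ≠ 0 := by
    intro h
    exact hθ1 (by field_simp; linear_combination -h)
  simp only [distD, leftT, map_zero, LinearMap.zero_apply, smul_zero, add_zero, map_add,
    map_smul, Real.sqrt_sq hcpos.le]
  refine sq_smul_aux _ _ _ _ _ _ ?_ ?_
  · have hk : V - (Vb + c • ((2 * θ * (1 - s * θ) / (1 - s * θ) ^ 2) • v))
        = (V - Vb) - (c * (2 * θ / (1 - s * θ))) • v := by
      rw [smul_smul, show c * (2 * θ * (1 - s * θ) / (1 - s * θ) ^ 2)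
        = c * (2 * θ / (1 - s * θ)) by field_simp]
      abel
    rw [hk, norm_smul, Real.norm_eq_abs, mul_pow, sq_abs, norm_sub_sq_real,
      real_inner_smul_right, norm_smul, Real.norm_eq_abs, mul_pow, sq_abs, hv]
    have hu' : 1 - θ * s ≠ 0 := by rwa [mul_comm]
    field_simp
    ring
  · have hu' : 1 - θ * s ≠ 0 := by rwa [mul_comm]
    match_scalars <;> field_simp <;> ring
end
end

section
/- Let V₀ ∈ 𝔳 and x₀ = (V₀, 0, −1 − ¼‖V₀‖²), so that the focal variety F_{x₀} passes through e = (0,0,1). Let (v, z, s) ∈ 𝔳 × 𝔷 × ℝ be a unit vector (‖v‖² + ‖z‖² + s² = 1) with v = −½(s·V₀ + J_z(V₀)) (this says exactly that (v,z,s) is orthogonal to the tangent space T_e F_{x₀}). Then s² + ‖z‖² ≠ 0, 1/(s² + ‖z‖²) = 1 + ¼‖V₀‖², and −(2s/(s²+‖z‖²))·v + (2/(s²+‖z‖²))·J_z(v) = V₀; consequently the prolongation of the geodesic γ passes through x₀, i.e. lim_{θ→∞} γ(θ) = x₀. -/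
open RealInnerProductSpace Filter Topology

/-- Let `x₀ = (V₀, 0, -1 - ¼‖V₀‖²)` (so the focal variety `F_{x₀}` passes through
`e = (0,0,1)`), and let `(v,z,s)` be a unit vector with `v = -½(s V₀ + J_z V₀)`
(orthogonality to `T_e F_{x₀}`). Then `s² + ‖z‖² ≠ 0`,
`1/(s²+‖z‖²) = 1 + ¼‖V₀‖²`, `-(2s/(s²+‖z‖²)) v + (2/(s²+‖z‖²)) J_z v = V₀`, and the
prolongation of the geodesic `γ` passes through `x₀`: `lim_{θ→∞} γ(θ) = x₀`. -/
theorem stmt_13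
    {𝕍 𝕫 : Type*} [NormedAddCommGroup 𝕍] [InnerProductSpace ℝ 𝕍] [FiniteDimensional ℝ 𝕍]
    [NormedAddCommGroup 𝕫] [InnerProductSpace ℝ 𝕫] [FiniteDimensional ℝ 𝕫]
    (J : 𝕫 →ₗ[ℝ] 𝕍 →ₗ[ℝ] 𝕍)
    (hJsq : ∀ (z : 𝕫) (v : 𝕍), J z (J z v) = -(‖z‖ ^ 2) • v)
    (hJnorm : ∀ (z : 𝕫) (v : 𝕍), ‖J z v‖ = ‖z‖ * ‖v‖)
    (br : 𝕍 →ₗ[ℝ] 𝕍 →ₗ[ℝ] 𝕫)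
    (hbr : ∀ (U V : 𝕍) (Z : 𝕫), ⟪br U V, Z⟫ = ⟪J Z U, V⟫)
    (V₀ : 𝕍) (v : 𝕍) (z : 𝕫) (s : ℝ)
    (hunit : ‖v‖ ^ 2 + ‖z‖ ^ 2 + s ^ 2 = 1)
    (hv : v = -(1 / 2 : ℝ) • (s • V₀ + J z V₀)) :
    s ^ 2 + ‖z‖ ^ 2 ≠ 0 ∧
    1 / (s ^ 2 + ‖z‖ ^ 2) = 1 + (1 / 4) * ‖V₀‖ ^ 2 ∧
    (-(2 * s / (s ^ 2 + ‖z‖ ^ 2))) • v + (2 / (s ^ 2 + ‖z‖ ^ 2)) • J z v = V₀ ∧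
    Tendsto
      (fun θ : ℝ =>
        (((2 * θ * (1 - s * θ) / ((1 - s * θ) ^ 2 + ‖z‖ ^ 2 * θ ^ 2)) • v +
            (2 * θ ^ 2 / ((1 - s * θ) ^ 2 + ‖z‖ ^ 2 * θ ^ 2)) • J z v,
          (2 * θ / ((1 - s * θ) ^ 2 + ‖z‖ ^ 2 * θ ^ 2)) • z,
          (1 - θ ^ 2) / ((1 - s * θ) ^ 2 + ‖z‖ ^ 2 * θ ^ 2)) : 𝕍 × 𝕫 × ℝ))
      atTop
      (𝓝 (V₀, (0 : 𝕫), -1 - (1 / 4) * ‖V₀‖ ^ 2)) := by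
  -- `⟪J w V₀, V₀⟫ = 0` for all `w`
  have hskew : ∀ w : 𝕫, ⟪J w V₀, V₀⟫ = 0 := by
    intro w
    by_cases hw : ‖w‖ = 0
    · have : w = 0 := by simpa using hw
      simp [this]
    · have e1 : J w (V₀ + J w V₀) = J w V₀ + (-(‖w‖ ^ 2)) • V₀ := by
        rw [map_add, hJsq]
      have h1 : ‖J w V₀ + (-(‖w‖ ^ 2)) • V₀‖ ^ 2 = ‖w‖ ^ 2 * ‖V₀ + J w V₀‖ ^ 2 := by
        rw [← e1, hJnorm]; ring
      rw [norm_add_sq_real, norm_add_sq_real, real_inner_smul_right, norm_smul,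
        real_inner_comm V₀ (J w V₀), hJnorm] at h1
      have hnn : ‖(-(‖w‖ ^ 2) : ℝ)‖ = ‖w‖ ^ 2 := by
        rw [Real.norm_eq_abs, abs_neg, abs_of_nonneg (sq_nonneg _)]
      rw [hnn] at h1
      have hw2 : (0 : ℝ) < ‖w‖ ^ 2 := by positivity
      have h4 : ‖w‖ ^ 2 * (inner ℝ V₀ ((J w) V₀) : ℝ) = 0 := by
        linear_combination (-1/4 : ℝ) * h1
      have h5 : (inner ℝ V₀ ((J w) V₀) : ℝ) = 0 :=
        (mul_eq_zero.mp h4).resolve_left (ne_of_gt hw2)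
      rw [real_inner_comm]
      exact h5
  have hvn : ‖v‖ ^ 2 = 1 / 4 * (s ^ 2 + ‖z‖ ^ 2) * ‖V₀‖ ^ 2 := by
    have hI : (inner ℝ V₀ ((J z) V₀) : ℝ) = 0 := by rw [real_inner_comm]; exact hskew z
    rw [hv, norm_smul, mul_pow, norm_add_sq_real, real_inner_smul_left, norm_smul, hI, hJnorm]
    simp only [Real.norm_eq_abs, sq_abs, mul_zero, add_zero, mul_pow]
    ring
  have hQ1 : (s ^ 2 + ‖z‖ ^ 2) * (1 + 1 / 4 * ‖V₀‖ ^ 2) = 1 := by nlinarith [hvn, hunit]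
  have hQ : s ^ 2 + ‖z‖ ^ 2 ≠ 0 := by
    intro h; rw [h] at hQ1; simp at hQ1
  have h2 : 1 / (s ^ 2 + ‖z‖ ^ 2) = 1 + 1 / 4 * ‖V₀‖ ^ 2 := by
    field_simp
    linarith [hQ1]
  have hJv : J z v = -(1 / 2 : ℝ) • (s • J z V₀ + (-(‖z‖ ^ 2)) • V₀) := by
    rw [hv]; rw [map_smul, map_add, map_smul, hJsq]
  have h3 : (-(2 * s / (s ^ 2 + ‖z‖ ^ 2))) • v + (2 / (s ^ 2 + ‖z‖ ^ 2)) • J z v = V₀ := by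
    rw [hJv, hv]
    match_scalars
    · field_simp
    · field_simp
      ring
  refine ⟨hQ, h2, h3, ?_⟩
  -- the limit
  set g : ℝ → 𝕍 × 𝕫 × ℝ := fun t =>
    (((2 * t - 2 * s) / ((t - s) ^ 2 + ‖z‖ ^ 2)) • v +
        (2 / ((t - s) ^ 2 + ‖z‖ ^ 2)) • J z v,
      (2 * t / ((t - s) ^ 2 + ‖z‖ ^ 2)) • z,
      (t ^ 2 - 1) / ((t - s) ^ 2 + ‖z‖ ^ 2)) with hgdef
  have hd0 : ((0 : ℝ) - s) ^ 2 + ‖z‖ ^ 2 ≠ 0 := by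
    simpa [add_comm] using hQ
  have hdc : ContinuousAt (fun t : ℝ => (t - s) ^ 2 + ‖z‖ ^ 2) 0 := by fun_prop
  have hcont : ContinuousAt g 0 := by
    refine ContinuousAt.prodMk ?_ (ContinuousAt.prodMk ?_ ?_)
    · exact (((ContinuousAt.div (by fun_prop) hdc hd0).smul continuousAt_const).add
        ((ContinuousAt.div (by fun_prop) hdc hd0).smul continuousAt_const))
    · exact (ContinuousAt.div (by fun_prop) hdc hd0).smul continuousAt_const
    · exact ContinuousAt.div (by fun_prop) hdc hd0
  have hg0 : g 0 = (V₀, (0 : 𝕫), -1 - (1 / 4) * ‖V₀‖ ^ 2) := by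
    rw [hgdef]
    simp only
    have hden : ((0 : ℝ) - s) ^ 2 + ‖z‖ ^ 2 = s ^ 2 + ‖z‖ ^ 2 := by ring
    rw [hden]
    refine Prod.ext ?_ (Prod.ext ?_ ?_)
    · simp only
      have c1 : (2 * (0:ℝ) - 2 * s) / (s ^ 2 + ‖z‖ ^ 2) = -(2 * s / (s ^ 2 + ‖z‖ ^ 2)) := by
        ring
      rw [c1]
      exact h3
    · simp
    · simp only
      rw [div_eq_iff hQ]
      linear_combination hQ1
  have htend : Tendsto (fun θ : ℝ => g θ⁻¹) atTop (𝓝 (V₀, (0 : 𝕫), -1 - (1 / 4) * ‖V₀‖ ^ 2)) := by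
    rw [← hg0]
    exact (hcont.tendsto).comp tendsto_inv_atTop_zero
  refine Tendsto.congr' ?_ htend
  filter_upwards [eventually_gt_atTop (0 : ℝ)] with θ hθ
  have hθ0 : θ ≠ 0 := ne_of_gt hθ
  have hc : ((θ⁻¹) ^ 2 : ℝ) ≠ 0 := by positivity
  have hden : ((1 - s * θ) ^ 2 + ‖z‖ ^ 2 * θ ^ 2) * (θ⁻¹) ^ 2 = (θ⁻¹ - s) ^ 2 + ‖z‖ ^ 2 := by
    field_simp
  have key : ∀ a : ℝ, (a * (θ⁻¹) ^ 2) / ((θ⁻¹ - s) ^ 2 + ‖z‖ ^ 2)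
      = a / ((1 - s * θ) ^ 2 + ‖z‖ ^ 2 * θ ^ 2) := by
    intro a
    rw [← hden]
    exact mul_div_mul_right a _ hc
  have hA : (2 * θ⁻¹ - 2 * s) / ((θ⁻¹ - s) ^ 2 + ‖z‖ ^ 2)
      = 2 * θ * (1 - s * θ) / ((1 - s * θ) ^ 2 + ‖z‖ ^ 2 * θ ^ 2) := by
    rw [← key (2 * θ * (1 - s * θ))]
    congr 1
    field_simp
  have hB : (2 : ℝ) / ((θ⁻¹ - s) ^ 2 + ‖z‖ ^ 2)
      = 2 * θ ^ 2 / ((1 - s * θ) ^ 2 + ‖z‖ ^ 2 * θ ^ 2) := by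
    rw [← key (2 * θ ^ 2)]
    congr 1
    field_simp
  have hC : (2 * θ⁻¹) / ((θ⁻¹ - s) ^ 2 + ‖z‖ ^ 2)
      = 2 * θ / ((1 - s * θ) ^ 2 + ‖z‖ ^ 2 * θ ^ 2) := by
    rw [← key (2 * θ)]
    congr 1
    field_simp
  have hD : ((θ⁻¹) ^ 2 - 1) / ((θ⁻¹ - s) ^ 2 + ‖z‖ ^ 2)
      = (1 - θ ^ 2) / ((1 - s * θ) ^ 2 + ‖z‖ ^ 2 * θ ^ 2) := by
    rw [← key (1 - θ ^ 2)]
    congr 1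
    field_simp
  simp only [hgdef]
  rw [hA, hB, hC, hD]
end

section
/- Let (v, z, s) ∈ 𝔳 × 𝔷 × ℝ be a unit vector (‖v‖² + ‖z‖² + s² = 1) with s² + ‖z‖² ≠ 0, and set V₀ = −(2s/(s²+‖z‖²))·v + (2/(s²+‖z‖²))·J_z(v) and t₀ = −1/(s²+‖z‖²) (so that the prolonged geodesic γ satisfies γ(∞) = (V₀, 0, t₀)). Then t₀ = −1 − ¼‖V₀‖², so the point e = (0,0,1) lies on the focal variety F_{(V₀,0,t₀)}, and v = −½(s·V₀ + J_z(V₀)), so the initial velocity (v, z, s) of γ is orthogonal to the tangent space T_e F_{(V₀,0,t₀)} = {(v', z', s') : s' = ½⟨v', V₀⟩, z' = −½[v', V₀]}. -/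
open RealInnerProductSpace

/-- Let `(v,z,s)` be a unit vector with `s² + ‖z‖² ≠ 0`, and set
`V₀ = -(2s/(s²+‖z‖²)) v + (2/(s²+‖z‖²)) J_z v`, `t₀ = -1/(s²+‖z‖²)` (the endpoint
`γ(∞)` of the prolonged geodesic). Then `t₀ = -1 - ¼‖V₀‖²`, the point `e = (0,0,1)`
lies on the focal variety `F_{(V₀,0,t₀)}`, `v = -½(s V₀ + J_z V₀)`, and `(v,z,s)` is
orthogonal to the tangent space
`T_e F = {(v',z',s') : s' = ½⟨v',V₀⟩, z' = -½[v',V₀]}`. -/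
theorem stmt_14
    {𝕍 𝕫 : Type*} [NormedAddCommGroup 𝕍] [InnerProductSpace ℝ 𝕍] [FiniteDimensional ℝ 𝕍]
    [NormedAddCommGroup 𝕫] [InnerProductSpace ℝ 𝕫] [FiniteDimensional ℝ 𝕫]
    (J : 𝕫 →ₗ[ℝ] 𝕍 →ₗ[ℝ] 𝕍)
    (hJsq : ∀ (z : 𝕫) (v : 𝕍), J z (J z v) = -(‖z‖ ^ 2) • v)
    (hJnorm : ∀ (z : 𝕫) (v : 𝕍), ‖J z v‖ = ‖z‖ * ‖v‖)
    (br : 𝕍 →ₗ[ℝ] 𝕍 →ₗ[ℝ] 𝕫)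
    (hbr : ∀ (U V : 𝕍) (Z : 𝕫), ⟪br U V, Z⟫ = ⟪J Z U, V⟫)
    (v : 𝕍) (z : 𝕫) (s : ℝ)
    (hunit : ‖v‖ ^ 2 + ‖z‖ ^ 2 + s ^ 2 = 1)
    (hsz : s ^ 2 + ‖z‖ ^ 2 ≠ 0)
    (V₀ : 𝕍) (t₀ : ℝ)
    (hV₀ : V₀ = (-(2 * s / (s ^ 2 + ‖z‖ ^ 2))) • v + (2 / (s ^ 2 + ‖z‖ ^ 2)) • J z v)
    (ht₀ : t₀ = -1 / (s ^ 2 + ‖z‖ ^ 2)) :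
    t₀ = -1 - (1 / 4) * ‖V₀‖ ^ 2 ∧
    (‖(0 : 𝕍) - V₀‖ ^ 2 = -4 * (1 + t₀) ∧ (0 : 𝕫) = 0 - (1 / 2 : ℝ) • br 0 V₀) ∧
    v = -(1 / 2 : ℝ) • (s • V₀ + J z V₀) ∧
    (∀ (v' : 𝕍) (z' : 𝕫) (s' : ℝ), s' = (1 / 2) * ⟪v', V₀⟫ →
      z' = -(1 / 2 : ℝ) • br v' V₀ → ⟪v, v'⟫ + ⟪z, z'⟫ + s * s' = 0) := by
  -- J z is an isometry on inner products
  have hiso : ∀ (w : 𝕫) (u u' : 𝕍), ⟪J w u, J w u'⟫ = ‖w‖ ^ 2 * ⟪u, u'⟫ := by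
    intro w u u'
    have h1 : ‖J w u + J w u'‖ ^ 2 = ‖w‖ ^ 2 * ‖u + u'‖ ^ 2 := by
      rw [← map_add, hJnorm]; ring
    have h2 : ‖J w u‖ ^ 2 = ‖w‖ ^ 2 * ‖u‖ ^ 2 := by rw [hJnorm]; ring
    have h3 : ‖J w u'‖ ^ 2 = ‖w‖ ^ 2 * ‖u'‖ ^ 2 := by rw [hJnorm]; ring
    have e1 := norm_add_sq_real (J w u) (J w u')
    have e2 := norm_add_sq_real u u'
    nlinarith [e1, e2, h1, h2, h3]
  have hskew : ∀ (w : 𝕫) (u u' : 𝕍), ⟪J w u, u'⟫ = -⟪u, J w u'⟫ := by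
    intro w u u'
    rcases eq_or_ne w 0 with rfl | hw
    · simp
    · have hw' : (‖w‖ : ℝ) ^ 2 ≠ 0 := pow_ne_zero _ (norm_ne_zero_iff.mpr hw)
      have h := hiso w u (J w u')
      rw [hJsq, inner_smul_right] at h
      have h2 : ‖w‖ ^ 2 * (-⟪J w u, u'⟫) = ‖w‖ ^ 2 * ⟪u, J w u'⟫ := by
        linear_combination h
      have h3 := mul_left_cancel₀ hw' h2
      linarith
  have hJvv : ⟪v, J z v⟫ = 0 := by
    have h := hskew z v v
    have hc := real_inner_comm v (J z v)
    linarith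
  have hA0 : s ^ 2 + ‖z‖ ^ 2 ≠ 0 := hsz
  have hv2 : ‖v‖ ^ 2 = 1 - (s ^ 2 + ‖z‖ ^ 2) := by linarith
  have hVnorm : ‖V₀‖ ^ 2 = 4 * (1 - (s ^ 2 + ‖z‖ ^ 2)) / (s ^ 2 + ‖z‖ ^ 2) := by
    have h0 : ‖V₀‖ ^ 2 = ⟪V₀, V₀⟫ := (real_inner_self_eq_norm_sq V₀).symm
    rw [h0, hV₀]
    rw [inner_add_left, inner_add_right, inner_add_right, inner_smul_left,
      inner_smul_left, inner_smul_left, inner_smul_left, inner_smul_right,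
      inner_smul_right, inner_smul_right, inner_smul_right]
    have h1 : ⟪v, v⟫ = 1 - (s ^ 2 + ‖z‖ ^ 2) := by
      rw [real_inner_self_eq_norm_sq, hv2]
    have h2 : ⟪J z v, J z v⟫ = ‖z‖ ^ 2 * (1 - (s ^ 2 + ‖z‖ ^ 2)) := by
      rw [hiso, real_inner_self_eq_norm_sq, hv2]
    have h3 : ⟪J z v, v⟫ = 0 := by rw [real_inner_comm]; exact hJvv
    rw [h1, h2, h3, hJvv]
    simp only [starRingEnd_apply, star_trivial]
    field_simp
    ring
  have hsV : s • V₀ + J z V₀ = (-2 : ℝ) • v := by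
    rw [hV₀]
    rw [smul_add, map_add, map_smul, map_smul, hJsq]
    match_scalars
    · field_simp; ring
    · field_simp; ring
  refine ⟨?_, ⟨?_, by simp⟩, ?_, ?_⟩
  · rw [ht₀, hVnorm]
    field_simp
    ring
  · rw [ht₀]
    simp only [zero_sub, norm_neg]
    rw [hVnorm]
    field_simp
    ring
  · rw [hsV, smul_smul]
    norm_num
  · intro v' z' s' hs' hz'
    rw [hs', hz', inner_smul_right]
    have hkey : ⟪v', s • V₀ + J z V₀⟫ = -2 * ⟪v', v⟫ := by
      rw [hsV, inner_smul_right]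
    rw [inner_add_right, inner_smul_right] at hkey
    have hc : ⟪v, v'⟫ = ⟪v', v⟫ := real_inner_comm v' v
    have hcomm : ⟪z, br v' V₀⟫ = ⟪br v' V₀, z⟫ := real_inner_comm _ _
    have hb := hbr v' V₀ z
    have hsk := hskew z v' V₀
    linear_combination hc - (1 / 2 : ℝ) * hcomm - (1 / 2 : ℝ) * hb
      - (1 / 2 : ℝ) * hsk + (1 / 2 : ℝ) * hkey
end

section
/- Let V₀ ∈ 𝔳 and x₀ = (V₀, 0, −1 − ¼‖V₀‖²). The following are equivalent: (i) for every (v, z, s) ∈ 𝔳 × 𝔷 × ℝ with s = ½⟨v, V₀⟩, z = −½[v, V₀] and ‖v‖² + ‖z‖² + s² = 1, and for every θ ∈ (−1, 1), the point γ(θ) = (V(θ), Z(θ), t(θ)) lies on the focal variety F_{x₀}, i.e. t(θ) = 1 − ¼‖V(θ)‖² + ½⟨V(θ), V₀⟩ and Z(θ) = −½[V(θ), V₀]; (ii) V₀ satisfies the J²-condition. (Equivalently: F_{x₀} contains every geodesic starting at e with initial velocity tangent to F_{x₀} if and only if V₀ satisfies the J²-condition.) -/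
open RealInnerProductSpace

section AuxLemmasForStmt15

variable {𝕍 𝕫 : Type*} [NormedAddCommGroup 𝕍] [InnerProductSpace ℝ 𝕍]
  [NormedAddCommGroup 𝕫] [InnerProductSpace ℝ 𝕫]

private lemma stmt15_skew0 (J : 𝕫 →ₗ[ℝ] 𝕍 →ₗ[ℝ] 𝕍)
    (hJsq : ∀ (z : 𝕫) (v : 𝕍), J z (J z v) = -(‖z‖ ^ 2) • v)
    (hJnorm : ∀ (z : 𝕫) (v : 𝕍), ‖J z v‖ = ‖z‖ * ‖v‖)
    (z : 𝕫) (x : 𝕍) : ⟪J z x, x⟫ = 0 := by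
  rcases eq_or_ne z 0 with h | h
  · simp [h]
  · have hz : (0:ℝ) < ‖z‖ := norm_pos_iff.mpr h
    have h1 : ‖J z (x + J z x)‖ = ‖z‖ * ‖x + J z x‖ := hJnorm _ _
    have h2 : J z (x + J z x) = J z x - (‖z‖^2 : ℝ) • x := by
      rw [map_add, hJsq, neg_smul, ← sub_eq_add_neg]
    have h3 : ‖J z x‖ = ‖z‖ * ‖x‖ := hJnorm _ _
    have e1 : ‖J z x - (‖z‖^2 : ℝ) • x‖^2
        = ‖J z x‖^2 - 2*(‖z‖^2)*⟪J z x, x⟫ + ‖z‖^4*‖x‖^2 := by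
      rw [norm_sub_sq_real, norm_smul, real_inner_smul_right]
      rw [Real.norm_of_nonneg (sq_nonneg _)]
      ring
    have e2 : ‖x + J z x‖^2 = ‖x‖^2 + 2*⟪x, J z x⟫ + ‖J z x‖^2 := norm_add_sq_real _ _
    have e3 : ‖J z (x + J z x)‖^2 = ‖z‖^2 * ‖x + J z x‖^2 := by rw [h1]; ring
    rw [h2, e1, e2] at e3
    have hc : ⟪x, J z x⟫ = ⟪J z x, x⟫ := real_inner_comm _ _
    rw [hc] at e3
    have h4 : ‖J z x‖^2 = ‖z‖^2 * ‖x‖^2 := by rw [h3]; ring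
    rw [h4] at e3
    have h5 : ‖z‖^2 * ⟪J z x, x⟫ = 0 := by nlinarith
    have h6 : ‖z‖^2 ≠ 0 := pow_ne_zero _ hz.ne'
    exact (mul_eq_zero.mp h5).resolve_left h6

private lemma stmt15_skew (J : 𝕫 →ₗ[ℝ] 𝕍 →ₗ[ℝ] 𝕍)
    (hJsq : ∀ (z : 𝕫) (v : 𝕍), J z (J z v) = -(‖z‖ ^ 2) • v)
    (hJnorm : ∀ (z : 𝕫) (v : 𝕍), ‖J z v‖ = ‖z‖ * ‖v‖)
    (z : 𝕫) (x y : 𝕍) : ⟪J z x, y⟫ = -⟪x, J z y⟫ := by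
  have h := stmt15_skew0 J hJsq hJnorm z (x + y)
  rw [map_add, inner_add_left, inner_add_right, inner_add_right,
    stmt15_skew0 J hJsq hJnorm, stmt15_skew0 J hJsq hJnorm] at h
  have hc : ⟪J z y, x⟫ = ⟪x, J z y⟫ := real_inner_comm _ _
  linarith

private lemma stmt15_normpolar (J : 𝕫 →ₗ[ℝ] 𝕍 →ₗ[ℝ] 𝕍)
    (hJnorm : ∀ (z : 𝕫) (v : 𝕍), ‖J z v‖ = ‖z‖ * ‖v‖)
    (z₁ z₂ : 𝕫) (v : 𝕍) : ⟪J z₁ v, J z₂ v⟫ = ⟪z₁, z₂⟫ * ‖v‖^2 := by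
  have h : ‖J (z₁ + z₂) v‖^2 = (‖z₁ + z₂‖ * ‖v‖)^2 := by rw [hJnorm]
  rw [map_add, LinearMap.add_apply, norm_add_sq_real] at h
  have h2 : (‖z₁ + z₂‖ * ‖v‖)^2 = ‖z₁ + z₂‖^2 * ‖v‖^2 := by ring
  rw [h2, norm_add_sq_real] at h
  have h3 : ‖J z₁ v‖^2 = ‖z₁‖^2 * ‖v‖^2 := by rw [hJnorm]; ring
  have h4 : ‖J z₂ v‖^2 = ‖z₂‖^2 * ‖v‖^2 := by rw [hJnorm]; ring
  rw [h3, h4] at h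
  linarith [h]

private lemma stmt15_br_self (J : 𝕫 →ₗ[ℝ] 𝕍 →ₗ[ℝ] 𝕍) (br : 𝕍 →ₗ[ℝ] 𝕍 →ₗ[ℝ] 𝕫)
    (hbr : ∀ (U V : 𝕍) (Z : 𝕫), ⟪br U V, Z⟫ = ⟪J Z U, V⟫)
    (skew0 : ∀ (z : 𝕫) (x : 𝕍), ⟪J z x, x⟫ = 0)
    (v : 𝕍) : br v v = 0 := by
  have h : ⟪br v v, br v v⟫ = 0 := by rw [hbr, skew0]
  exact inner_self_eq_zero.mp h

private lemma stmt15_br_J (J : 𝕫 →ₗ[ℝ] 𝕍 →ₗ[ℝ] 𝕍) (br : 𝕍 →ₗ[ℝ] 𝕍 →ₗ[ℝ] 𝕫)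
    (hbr : ∀ (U V : 𝕍) (Z : 𝕫), ⟪br U V, Z⟫ = ⟪J Z U, V⟫)
    (skew : ∀ (z : 𝕫) (x y : 𝕍), ⟪J z x, y⟫ = -⟪x, J z y⟫)
    (normpolar : ∀ (z₁ z₂ : 𝕫) (v : 𝕍), ⟪J z₁ v, J z₂ v⟫ = ⟪z₁, z₂⟫ * ‖v‖^2)
    (a : 𝕫) (V₀ : 𝕍) : br (J a V₀) V₀ = -(‖V₀‖^2 : ℝ) • a := by
  apply ext_inner_right ℝ
  intro ζ
  rw [hbr, skew, real_inner_comm, normpolar, real_inner_smul_left]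
  rw [real_inner_comm a ζ]
  ring

/-- The `J²`-condition for `V₀` is equivalent to the bracket identity `(★)`. -/
private lemma stmt15_star_iff [FiniteDimensional ℝ 𝕍]
    (J : 𝕫 →ₗ[ℝ] 𝕍 →ₗ[ℝ] 𝕍) (br : 𝕍 →ₗ[ℝ] 𝕍 →ₗ[ℝ] 𝕫)
    (hJsq : ∀ (z : 𝕫) (v : 𝕍), J z (J z v) = -(‖z‖ ^ 2) • v)
    (hbr : ∀ (U V : 𝕍) (Z : 𝕫), ⟪br U V, Z⟫ = ⟪J Z U, V⟫)
    (skew0 : ∀ (z : 𝕫) (x : 𝕍), ⟪J z x, x⟫ = 0)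
    (skew : ∀ (z : 𝕫) (x y : 𝕍), ⟪J z x, y⟫ = -⟪x, J z y⟫)
    (normpolar : ∀ (z₁ z₂ : 𝕫) (v : 𝕍), ⟪J z₁ v, J z₂ v⟫ = ⟪z₁, z₂⟫ * ‖v‖^2)
    (br_self : ∀ v : 𝕍, br v v = 0)
    (br_J : ∀ (a : 𝕫) (V₀ : 𝕍), br (J a V₀) V₀ = -(‖V₀‖^2 : ℝ) • a)
    (V₀ : 𝕍) :
    (∀ v : 𝕍, br (J (br v V₀) v) V₀ = -⟪v, V₀⟫ • br v V₀) ↔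
      (∀ z₁ z₂ : 𝕫, ⟪z₁, z₂⟫ = 0 → ∃ z₃ : 𝕫, J z₁ (J z₂ V₀) = J z₃ V₀) := by
  rcases eq_or_ne V₀ 0 with hV | hV
  · subst hV
    exact ⟨fun _ z₁ z₂ _ => ⟨0, by simp⟩, fun _ v => by simp⟩
  · have hm : 0 < ‖V₀‖^2 := pow_pos (norm_pos_iff.mpr hV) 2
    set K : Submodule ℝ 𝕍 := (ℝ ∙ V₀) ⊔ LinearMap.range (J.flip V₀) with hK_def
    have hV₀K : V₀ ∈ K := Submodule.mem_sup_left (Submodule.mem_span_singleton_self V₀)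
    have hJK : ∀ ζ : 𝕫, J ζ V₀ ∈ K := fun ζ =>
      Submodule.mem_sup_right (LinearMap.mem_range_self _ ζ)
    have hK_mem : ∀ u ∈ K, ∃ (c : ℝ) (ζ : 𝕫), u = c • V₀ + J ζ V₀ := by
      intro u hu
      rw [hK_def, Submodule.mem_sup] at hu
      obtain ⟨p, hp, q, hq, rfl⟩ := hu
      obtain ⟨c, rfl⟩ := Submodule.mem_span_singleton.mp hp
      obtain ⟨ζ, rfl⟩ := hq
      exact ⟨c, ζ, rfl⟩
    have hW1 : ∀ ξ ∈ Kᗮ, ⟪ξ, V₀⟫ = 0 := by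
      intro ξ hξ
      rw [real_inner_comm]
      exact hξ V₀ hV₀K
    have hW2 : ∀ ξ ∈ Kᗮ, br ξ V₀ = 0 := by
      intro ξ hξ
      apply inner_self_eq_zero (𝕜 := ℝ) |>.mp
      rw [hbr, skew]
      have h0 : ⟪J (br ξ V₀) V₀, ξ⟫ = 0 := hξ _ (hJK _)
      rw [real_inner_comm] at h0
      rw [h0, neg_zero]
    constructor
    · -- Star → J²
      intro hstar z₁ z₂ hz12
      have h1 : ∀ (a : 𝕫) (ξ : 𝕍), ξ ∈ Kᗮ → br (J a ξ) V₀ = 0 := by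
        intro a ξ hξ
        have hs := hstar (J a V₀ + ξ)
        have hw : br (J a V₀ + ξ) V₀ = -((‖V₀‖^2 : ℝ) • a) := by
          rw [map_add, LinearMap.add_apply, br_J, hW2 ξ hξ, add_zero, neg_smul]
        have hvV : ⟪J a V₀ + ξ, V₀⟫ = 0 := by
          rw [inner_add_left, hW1 ξ hξ, skew0, add_zero]
        rw [hw, hvV, neg_zero, zero_smul, map_neg, map_smul] at hs
        have hexp : J a (J a V₀ + ξ) = -(‖a‖^2 : ℝ) • V₀ + J a ξ := by
          rw [map_add, hJsq]
        rw [LinearMap.neg_apply, LinearMap.smul_apply, hexp] at hs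
        rw [map_neg, map_smul, map_add, map_smul] at hs
        simp only [LinearMap.neg_apply, LinearMap.smul_apply, LinearMap.add_apply] at hs
        rw [br_self] at hs
        simp only [smul_zero, zero_add, neg_eq_zero, smul_eq_zero] at hs
        rcases hs with h | h
        · exact absurd h hm.ne'
        · exact h
      have hu_orth : ∀ ξ ∈ Kᗮ, ⟪ξ, J z₁ (J z₂ V₀)⟫ = 0 := by
        intro ξ hξ
        have h2 : br (J z₁ ξ) V₀ = 0 := h1 z₁ ξ hξ
        have h3 : ⟪J z₁ ξ, J z₂ V₀⟫ = 0 := by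
          have h4 := hbr (J z₁ ξ) V₀ z₂
          rw [h2, skew] at h4
          simp only [inner_zero_left] at h4
          linarith
        have h5 := skew z₁ ξ (J z₂ V₀)
        rw [h3] at h5
        linarith
      have huK : J z₁ (J z₂ V₀) ∈ K := by
        have hKK : J z₁ (J z₂ V₀) ∈ Kᗮᗮ := fun w hw => hu_orth w hw
        rwa [Submodule.orthogonal_orthogonal] at hKK
      obtain ⟨c, z₃, he⟩ := hK_mem _ huK
      have huV : ⟪J z₁ (J z₂ V₀), V₀⟫ = 0 := by
        rw [skew, normpolar, real_inner_comm z₁ z₂, hz12]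
        ring
      rw [he, inner_add_left, real_inner_smul_left, skew0, real_inner_self_eq_norm_sq] at huV
      have hc : c = 0 := by
        have hcm : c * ‖V₀‖^2 = 0 := by linarith
        exact (mul_eq_zero.mp hcm).resolve_right hm.ne'
      refine ⟨z₃, ?_⟩
      rw [he, hc, zero_smul, zero_add]
    · -- J² → Star
      intro hJ2
      have hK2 : ∀ a ζ : 𝕫, J a (J ζ V₀) ∈ K := by
        intro a ζ
        rcases eq_or_ne a 0 with rfl | ha
        · simp only [map_zero, LinearMap.zero_apply]
          exact K.zero_mem
        · have hna : (0:ℝ) < ‖a‖^2 := pow_pos (norm_pos_iff.mpr ha) 2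
          set lam : ℝ := ⟪ζ, a⟫ / ‖a‖^2 with hlam
          have hperp : ⟪a, ζ - lam • a⟫ = 0 := by
            rw [inner_sub_right, real_inner_smul_right, real_inner_comm ζ a,
              real_inner_self_eq_norm_sq, hlam]
            field_simp
            ring
          obtain ⟨z₃, h3⟩ := hJ2 a (ζ - lam • a) hperp
          have he : J a (J ζ V₀) = J z₃ V₀ + lam • ((-(‖a‖^2) : ℝ) • V₀) := by
            have e0 : J ζ V₀ = J (ζ - lam • a) V₀ + lam • J a V₀ := by
              rw [map_sub, map_smul]
              simp only [LinearMap.sub_apply, LinearMap.smul_apply]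
              abel
            rw [e0, map_add, map_smul, h3, hJsq]
          rw [he]
          exact K.add_mem (hJK z₃) (K.smul_mem _ (K.smul_mem _ hV₀K))
      have h2 : ∀ (a : 𝕫), ∀ ξ ∈ Kᗮ, br (J a ξ) V₀ = 0 := by
        intro a ξ hξ
        apply inner_self_eq_zero (𝕜 := ℝ) |>.mp
        set w := br (J a ξ) V₀ with hw
        have e1 : ⟪w, w⟫ = ⟪J w (J a ξ), V₀⟫ := by rw [hw, hbr]
        have e2 : ⟪J w (J a ξ), V₀⟫ = -⟪J a ξ, J w V₀⟫ := skew _ _ _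
        have e3 : ⟪J a ξ, J w V₀⟫ = -⟪ξ, J a (J w V₀)⟫ := skew _ _ _
        have e4 : ⟪J a (J w V₀), ξ⟫ = 0 := hξ _ (hK2 a w)
        rw [real_inner_comm] at e4
        rw [e1, e2, e3, e4, neg_neg]
      intro v
      obtain ⟨k, hkK, ξ, hξ, hv⟩ := K.exists_add_mem_mem_orthogonal v
      obtain ⟨α, a, hk⟩ := hK_mem k hkK
      rw [hk] at hv
      subst hv
      have hξV : ⟪ξ, V₀⟫ = 0 := hW1 ξ hξ
      have hξbr : br ξ V₀ = 0 := hW2 ξ hξ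
      have hbrv : br (α • V₀ + J a V₀ + ξ) V₀ = -((‖V₀‖^2 : ℝ) • a) := by
        rw [map_add, map_add, LinearMap.add_apply, LinearMap.add_apply, map_smul,
          LinearMap.smul_apply, br_self, br_J, hξbr, smul_zero, zero_add, add_zero,
          neg_smul]
      have hvV : ⟪α • V₀ + J a V₀ + ξ, V₀⟫ = α * ‖V₀‖^2 := by
        rw [inner_add_left, inner_add_left, real_inner_smul_left, skew0, hξV,
          real_inner_self_eq_norm_sq]
        ring
      rw [hbrv, hvV]
      have hJav : J a (α • V₀ + J a V₀ + ξ) = α • J a V₀ + (-(‖a‖^2) : ℝ) • V₀ + J a ξ := by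
        rw [map_add, map_add, map_smul, hJsq]
      have hbrJ : br (J a (α • V₀ + J a V₀ + ξ)) V₀ = -((α * ‖V₀‖^2 : ℝ) • a) := by
        rw [hJav, map_add, map_add, LinearMap.add_apply, LinearMap.add_apply, map_smul,
          LinearMap.smul_apply, map_smul, LinearMap.smul_apply, br_J, br_self, h2 a ξ hξ,
          smul_zero, add_zero, add_zero]
        rw [smul_smul]
        module
      have hJneg : J (-((‖V₀‖^2 : ℝ) • a)) (α • V₀ + J a V₀ + ξ)
          = -((‖V₀‖^2 : ℝ) • J a (α • V₀ + J a V₀ + ξ)) := by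
        rw [map_neg, map_smul]
        simp only [LinearMap.neg_apply, LinearMap.smul_apply]
      rw [hJneg, map_neg, map_smul, LinearMap.neg_apply, LinearMap.smul_apply, hbrJ]
      module


private lemma stmt15_C1_to_star (J : 𝕫 →ₗ[ℝ] 𝕍 →ₗ[ℝ] 𝕍) (br : 𝕍 →ₗ[ℝ] 𝕍 →ₗ[ℝ] 𝕫)
    (skew0 : ∀ (z : 𝕫) (x : 𝕍), ⟪J z x, x⟫ = 0)
    (V₀ : 𝕍)
    (hC1 : ∀ (v : 𝕍) (z : 𝕫) (s : ℝ),
        s = (1 / 2) * ⟪v, V₀⟫ → z = -(1 / 2 : ℝ) • br v V₀ →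
        ‖v‖ ^ 2 + ‖z‖ ^ 2 + s ^ 2 = 1 →
        ∀ θ ∈ Set.Ioo (-1 : ℝ) 1,
          ∀ χ : ℝ, χ = (1 - s * θ) ^ 2 + ‖z‖ ^ 2 * θ ^ 2 →
          ∀ Vθ : 𝕍, Vθ = (2 * θ * (1 - s * θ) / χ) • v + (2 * θ ^ 2 / χ) • J z v →
            (1 - θ ^ 2) / χ = 1 - (1 / 4) * ‖Vθ‖ ^ 2 + (1 / 2) * ⟪Vθ, V₀⟫ ∧
            (2 * θ / χ) • z = -(1 / 2 : ℝ) • br Vθ V₀) :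
    ∀ v : 𝕍, br (J (br v V₀) v) V₀ = -⟪v, V₀⟫ • br v V₀ := by
  intro v
  rcases eq_or_ne v 0 with rfl | hv
  · simp
  · obtain ⟨s₀, hs₀⟩ : ∃ s₀ : ℝ, s₀ = (1 / 2) * ⟪v, V₀⟫ := ⟨_, rfl⟩
    obtain ⟨z₀, hz₀⟩ : ∃ z₀ : 𝕫, z₀ = -(1 / 2 : ℝ) • br v V₀ := ⟨_, rfl⟩
    have hq : 0 < ‖v‖ ^ 2 + ‖z₀‖ ^ 2 + s₀ ^ 2 := by
      have : 0 < ‖v‖ ^ 2 := pow_pos (norm_pos_iff.mpr hv) 2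
      nlinarith [sq_nonneg ‖z₀‖, sq_nonneg s₀]
    obtain ⟨r, hrpos, hr2⟩ : ∃ r : ℝ, 0 < r ∧ r ^ 2 = ‖v‖ ^ 2 + ‖z₀‖ ^ 2 + s₀ ^ 2 :=
      ⟨Real.sqrt _, Real.sqrt_pos.mpr hq, Real.sq_sqrt hq.le⟩
    have hrne : r ≠ 0 := hrpos.ne'
    have hs' : r⁻¹ * s₀ = (1 / 2) * ⟪r⁻¹ • v, V₀⟫ := by
      rw [real_inner_smul_left, hs₀]; ring
    have hz' : r⁻¹ • z₀ = -(1 / 2 : ℝ) • br (r⁻¹ • v) V₀ := by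
      rw [map_smul, LinearMap.smul_apply, hz₀]; module
    have hnorm' : ‖r⁻¹ • v‖ ^ 2 + ‖r⁻¹ • z₀‖ ^ 2 + (r⁻¹ * s₀) ^ 2 = 1 := by
      rw [norm_smul, norm_smul, Real.norm_eq_abs, abs_of_pos (inv_pos.mpr hrpos)]
      have e : (r⁻¹ * ‖v‖) ^ 2 + (r⁻¹ * ‖z₀‖) ^ 2 + (r⁻¹ * s₀) ^ 2
          = r⁻¹ ^ 2 * (‖v‖ ^ 2 + ‖z₀‖ ^ 2 + s₀ ^ 2) := by ring
      rw [e, ← hr2]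
      field_simp
    have hθ : (1 / 2 : ℝ) ∈ Set.Ioo (-1 : ℝ) 1 := by norm_num
    obtain ⟨χ₀, hχ₀⟩ :
        ∃ c : ℝ, c = (1 - (r⁻¹ * s₀) * (1 / 2)) ^ 2 + ‖r⁻¹ • z₀‖ ^ 2 * (1 / 2) ^ 2 :=
      ⟨_, rfl⟩
    have h := (hC1 (r⁻¹ • v) (r⁻¹ • z₀) (r⁻¹ * s₀) hs' hz' hnorm' (1 / 2) hθ χ₀ hχ₀
      ((2 * (1 / 2) * (1 - (r⁻¹ * s₀) * (1 / 2)) / χ₀) • (r⁻¹ • v)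
        + (2 * (1 / 2) ^ 2 / χ₀) • J (r⁻¹ • z₀) (r⁻¹ • v)) rfl).2
    have hs2 : (r⁻¹ * s₀) ^ 2 ≤ 1 := by
      nlinarith [sq_nonneg ‖r⁻¹ • v‖, sq_nonneg ‖r⁻¹ • z₀‖]
    have hχpos : 0 < χ₀ := by
      rw [hχ₀]
      have h1 : 0 < (1 - (r⁻¹ * s₀) * (1 / 2)) ^ 2 := pow_pos (by nlinarith) 2
      nlinarith [mul_nonneg (sq_nonneg ‖r⁻¹ • z₀‖) (by norm_num : (0:ℝ) ≤ (1/2:ℝ)^2)]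
    have hχne : χ₀ ≠ 0 := hχpos.ne'
    -- expand h into unscaled quantities
    simp only [map_smul, map_add, LinearMap.add_apply, LinearMap.smul_apply] at h
    have hbrv0 : br v V₀ = (-2 : ℝ) • z₀ := by rw [hz₀]; module
    rw [hbrv0] at h
    set X : 𝕫 := br (J z₀ v) V₀ with hX
    clear_value X
    have h0 : -(1 / 2 : ℝ) •
          ((2 * (1 / 2) * (1 - r⁻¹ * s₀ * (1 / 2)) / χ₀) • r⁻¹ • ((-2 : ℝ) • z₀)
            + (2 * (1 / 2) ^ 2 / χ₀) • r⁻¹ • r⁻¹ • X)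
        - (2 * (1 / 2) / χ₀) • r⁻¹ • z₀ = 0 := by
      rw [← h]; abel
    have hY : X - (-(2 * s₀)) • z₀
        = (-4 * χ₀ * r ^ 2) •
          (-(1 / 2 : ℝ) •
            ((2 * (1 / 2) * (1 - r⁻¹ * s₀ * (1 / 2)) / χ₀) • r⁻¹ • ((-2 : ℝ) • z₀)
              + (2 * (1 / 2) ^ 2 / χ₀) • r⁻¹ • r⁻¹ • X)
            - (2 * (1 / 2) / χ₀) • r⁻¹ • z₀) := by
      match_scalars
      · field_simp
        ring
      · field_simp
        ring
    rw [h0, smul_zero] at hY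
    have key : X = (-(2 * s₀)) • z₀ := sub_eq_zero.mp hY
    rw [hbrv0]
    have hJ2 : J ((-2 : ℝ) • z₀) v = (-2 : ℝ) • J z₀ v := by rw [map_smul]; rfl
    rw [hJ2, map_smul, LinearMap.smul_apply, ← hX, key, hs₀]
    module

private lemma stmt15_star_to_C1 (J : 𝕫 →ₗ[ℝ] 𝕍 →ₗ[ℝ] 𝕍) (br : 𝕍 →ₗ[ℝ] 𝕍 →ₗ[ℝ] 𝕫)
    (hJnorm : ∀ (z : 𝕫) (v : 𝕍), ‖J z v‖ = ‖z‖ * ‖v‖)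
    (hbr : ∀ (U V : 𝕍) (Z : 𝕫), ⟪br U V, Z⟫ = ⟪J Z U, V⟫)
    (skew0 : ∀ (z : 𝕫) (x : 𝕍), ⟪J z x, x⟫ = 0)
    (V₀ : 𝕍)
    (hstar : ∀ v : 𝕍, br (J (br v V₀) v) V₀ = -⟪v, V₀⟫ • br v V₀) :
    ∀ (v : 𝕍) (z : 𝕫) (s : ℝ),
        s = (1 / 2) * ⟪v, V₀⟫ → z = -(1 / 2 : ℝ) • br v V₀ →
        ‖v‖ ^ 2 + ‖z‖ ^ 2 + s ^ 2 = 1 →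
        ∀ θ ∈ Set.Ioo (-1 : ℝ) 1,
          ∀ χ : ℝ, χ = (1 - s * θ) ^ 2 + ‖z‖ ^ 2 * θ ^ 2 →
          ∀ Vθ : 𝕍, Vθ = (2 * θ * (1 - s * θ) / χ) • v + (2 * θ ^ 2 / χ) • J z v →
            (1 - θ ^ 2) / χ = 1 - (1 / 4) * ‖Vθ‖ ^ 2 + (1 / 2) * ⟪Vθ, V₀⟫ ∧
            (2 * θ / χ) • z = -(1 / 2 : ℝ) • br Vθ V₀ := by
  intro v z s hs hz hnorm θ hθ χ hχ Vθ hVθ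
  obtain ⟨hθ1, hθ2⟩ := hθ
  have hbrv : br v V₀ = (-2 : ℝ) • z := by rw [hz]; module
  have hvJzv : ⟪v, J z v⟫ = 0 := by rw [← real_inner_comm]; exact skew0 z v
  have hJzvn : ‖J z v‖ ^ 2 = ‖z‖ ^ 2 * ‖v‖ ^ 2 := by rw [hJnorm]; ring
  have hJzvV : ⟪J z v, V₀⟫ = -2 * ‖z‖ ^ 2 := by
    rw [← hbr, hbrv, real_inner_smul_left, real_inner_self_eq_norm_sq]
  have hsv : ⟪v, V₀⟫ = 2 * s := by rw [hs]; ring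
  have hbrJzv : br (J z v) V₀ = (-(2 * s)) • z := by
    have h := hstar v
    rw [hbrv, hsv] at h
    have h2 : J ((-2 : ℝ) • z) v = (-2 : ℝ) • J z v := by
      rw [map_smul]; rfl
    rw [h2, map_smul, LinearMap.smul_apply] at h
    have h3 : ((-2 : ℝ)) • br (J z v) V₀ = ((-2 : ℝ)) • ((-(2 * s)) • z) := by
      rw [h]; module
    exact smul_right_injective 𝕫 (by norm_num) h3
  have hs2 : s ^ 2 ≤ 1 := by nlinarith [sq_nonneg ‖v‖, sq_nonneg ‖z‖]
  have hsθ : s * θ < 1 := by nlinarith [sq_nonneg (s - θ), sq_nonneg (s + θ)]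
  have hχpos : 0 < χ := by
    rw [hχ]
    have h1 : 0 < (1 - s * θ) ^ 2 := pow_pos (by linarith) 2
    nlinarith [mul_nonneg (sq_nonneg ‖z‖) (sq_nonneg θ)]
  have hχne : χ ≠ 0 := hχpos.ne'
  constructor
  · have hVθn : ‖Vθ‖ ^ 2 = (2 * θ * (1 - s * θ) / χ) ^ 2 * ‖v‖ ^ 2
        + (2 * θ ^ 2 / χ) ^ 2 * (‖z‖ ^ 2 * ‖v‖ ^ 2) := by
      rw [hVθ, norm_add_sq_real, real_inner_smul_left, real_inner_smul_right, hvJzv,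
        norm_smul, norm_smul, Real.norm_eq_abs, Real.norm_eq_abs, mul_pow, mul_pow,
        sq_abs, sq_abs, hJzvn]
      ring
    have hVθV : ⟪Vθ, V₀⟫ = (2 * θ * (1 - s * θ) / χ) * (2 * s)
        + (2 * θ ^ 2 / χ) * (-2 * ‖z‖ ^ 2) := by
      rw [hVθ, inner_add_left, real_inner_smul_left, real_inner_smul_left, hsv, hJzvV]
    have hv2 : ‖v‖ ^ 2 = 1 - ‖z‖ ^ 2 - s ^ 2 := by linarith
    rw [hVθn, hVθV, hv2, hχ]
    have hχne' : (1 - s * θ) ^ 2 + ‖z‖ ^ 2 * θ ^ 2 ≠ 0 := by rw [← hχ]; exact hχne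
    have hχne'' : (1 - θ * s) ^ 2 + θ ^ 2 * ‖z‖ ^ 2 ≠ 0 := by convert hχne' using 1; ring
    field_simp
    ring
  · have hbrVθ : br Vθ V₀ = (2 * θ * (1 - s * θ) / χ) • ((-2 : ℝ) • z)
        + (2 * θ ^ 2 / χ) • ((-(2 * s)) • z) := by
      rw [hVθ, map_add, LinearMap.add_apply, map_smul, map_smul, LinearMap.smul_apply,
        LinearMap.smul_apply, hbrv, hbrJzv]
    rw [hbrVθ]
    match_scalars
    field_simp
    ring


end AuxLemmasForStmt15

/-- Let `x₀ = (V₀, 0, -1 - ¼‖V₀‖²)`. The focal variety `F_{x₀}` contains every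
geodesic starting at `e` with initial velocity tangent to `F_{x₀}` — i.e. for every
unit `(v,z,s)` with `s = ½⟨v,V₀⟩`, `z = -½[v,V₀]` and every `θ ∈ (-1,1)` the point
`γ(θ) = (V(θ), Z(θ), t(θ))` satisfies `t(θ) = 1 - ¼‖V(θ)‖² + ½⟨V(θ),V₀⟩` and
`Z(θ) = -½[V(θ),V₀]` — if and only if `V₀` satisfies the `J²`-condition. -/
theorem stmt_15
    {𝕍 𝕫 : Type*} [NormedAddCommGroup 𝕍] [InnerProductSpace ℝ 𝕍] [FiniteDimensional ℝ 𝕍]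
    [NormedAddCommGroup 𝕫] [InnerProductSpace ℝ 𝕫] [FiniteDimensional ℝ 𝕫]
    (J : 𝕫 →ₗ[ℝ] 𝕍 →ₗ[ℝ] 𝕍)
    (hJsq : ∀ (z : 𝕫) (v : 𝕍), J z (J z v) = -(‖z‖ ^ 2) • v)
    (hJnorm : ∀ (z : 𝕫) (v : 𝕍), ‖J z v‖ = ‖z‖ * ‖v‖)
    (br : 𝕍 →ₗ[ℝ] 𝕍 →ₗ[ℝ] 𝕫)
    (hbr : ∀ (U V : 𝕍) (Z : 𝕫), ⟪br U V, Z⟫ = ⟪J Z U, V⟫)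
    (V₀ : 𝕍) :
    (∀ (v : 𝕍) (z : 𝕫) (s : ℝ),
        s = (1 / 2) * ⟪v, V₀⟫ → z = -(1 / 2 : ℝ) • br v V₀ →
        ‖v‖ ^ 2 + ‖z‖ ^ 2 + s ^ 2 = 1 →
        ∀ θ ∈ Set.Ioo (-1 : ℝ) 1,
          ∀ χ : ℝ, χ = (1 - s * θ) ^ 2 + ‖z‖ ^ 2 * θ ^ 2 →
          ∀ Vθ : 𝕍, Vθ = (2 * θ * (1 - s * θ) / χ) • v + (2 * θ ^ 2 / χ) • J z v →
            (1 - θ ^ 2) / χ = 1 - (1 / 4) * ‖Vθ‖ ^ 2 + (1 / 2) * ⟪Vθ, V₀⟫ ∧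
            (2 * θ / χ) • z = -(1 / 2 : ℝ) • br Vθ V₀) ↔
      (∀ z₁ z₂ : 𝕫, ⟪z₁, z₂⟫ = 0 → ∃ z₃ : 𝕫, J z₁ (J z₂ V₀) = J z₃ V₀) := by
  have skew0 : ∀ (z : 𝕫) (x : 𝕍), ⟪J z x, x⟫ = 0 := stmt15_skew0 J hJsq hJnorm
  have skew : ∀ (z : 𝕫) (x y : 𝕍), ⟪J z x, y⟫ = -⟪x, J z y⟫ := stmt15_skew J hJsq hJnorm
  have normpolar : ∀ (z₁ z₂ : 𝕫) (v : 𝕍), ⟪J z₁ v, J z₂ v⟫ = ⟪z₁, z₂⟫ * ‖v‖^2 :=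
    stmt15_normpolar J hJnorm
  have br_self : ∀ v : 𝕍, br v v = 0 := stmt15_br_self J br hbr skew0
  have br_J : ∀ (a : 𝕫) (W : 𝕍), br (J a W) W = -(‖W‖^2 : ℝ) • a :=
    stmt15_br_J J br hbr skew normpolar
  have star_iff := stmt15_star_iff J br hJsq hbr skew0 skew normpolar br_self br_J V₀
  constructor
  · intro hC1
    exact star_iff.mp (stmt15_C1_to_star J br skew0 V₀ hC1)
  · intro hJ2cond
    exact stmt15_star_to_C1 J br hJnorm hbr skew0 V₀ (star_iff.mpr hJ2cond)
end

section
/- For all real numbers t₀ < 0 and c > 0, the improper integral ∫₀^c 1/√(x² − 4t₀x) dx converges and equals 2·ln(√(c − 4t₀) + √c) − ln(−4t₀); consequently, if r denotes this integral, then c = −4t₀·sinh²(r/2). (In the Damek–Ricci space, r is the radius of the tube D_{x₀}^{-1}(c) about the focal variety F_{x₀} of the isoparametric function D_{x₀}, whose transnormality function is b(x) = x² − 4t₀x.) -/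
open Real MeasureTheory intervalIntegral Set

/-- For `t₀ < 0` and `c > 0`, the improper integral `∫₀^c dx/√(x² - 4t₀x)` converges
and equals `2 ln(√(c - 4t₀) + √c) - ln(-4t₀)`; consequently, if `r` denotes this
integral, then `c = -4t₀ sinh²(r/2)` (Wang's tube-radius formula for the tube
`D_{x₀}⁻¹(c)` about the focal variety `F_{x₀}`, with transnormality function
`b(x) = x² - 4t₀x`). -/
theorem stmt_18 (t₀ c : ℝ) (ht₀ : t₀ < 0) (hc : 0 < c) :
    IntervalIntegrable (fun x : ℝ => 1 / Real.sqrt (x ^ 2 - 4 * t₀ * x))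
      MeasureTheory.volume 0 c ∧
    (∫ x in (0 : ℝ)..c, 1 / Real.sqrt (x ^ 2 - 4 * t₀ * x)) =
      2 * Real.log (Real.sqrt (c - 4 * t₀) + Real.sqrt c) - Real.log (-(4 * t₀)) ∧
    (∀ r : ℝ, r = (∫ x in (0 : ℝ)..c, 1 / Real.sqrt (x ^ 2 - 4 * t₀ * x)) →
      c = -(4 * t₀) * Real.sinh (r / 2) ^ 2) := by
  have ha : (0:ℝ) < -(4*t₀) := by linarith
  -- Integrability
  have hint : IntervalIntegrable (fun x : ℝ => 1 / Real.sqrt (x ^ 2 - 4 * t₀ * x))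
      MeasureTheory.volume 0 c := by
    have hmeas : AEStronglyMeasurable (fun x : ℝ => 1 / Real.sqrt (x ^ 2 - 4 * t₀ * x))
        (volume.restrict (Set.uIoc (0:ℝ) c)) := by
      apply Measurable.aestronglyMeasurable
      fun_prop
    have hg : IntervalIntegrable (fun x : ℝ => (Real.sqrt (-(4*t₀)))⁻¹ * x ^ (-(1/2) : ℝ))
        volume 0 c :=
      (intervalIntegral.intervalIntegrable_rpow' (by norm_num)).const_mul _
    apply hg.mono_fun hmeas
    filter_upwards [ae_restrict_mem measurableSet_uIoc] with x hx
    rw [Set.uIoc_of_le hc.le] at hx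
    have hx0 : 0 < x := hx.1
    have h1 : Real.sqrt (-(4*t₀)) * Real.sqrt x ≤ Real.sqrt (x ^ 2 - 4 * t₀ * x) := by
      rw [← Real.sqrt_mul ha.le]
      apply Real.sqrt_le_sqrt
      nlinarith
    have hsx : 0 < Real.sqrt x := Real.sqrt_pos.mpr hx0
    have hsa : 0 < Real.sqrt (-(4*t₀)) := Real.sqrt_pos.mpr ha
    rw [Real.norm_eq_abs, Real.norm_eq_abs, abs_of_nonneg (by positivity),
      abs_of_nonneg (by positivity)]
    rw [Real.rpow_neg hx0.le, ← Real.sqrt_eq_rpow]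
    rw [one_div]
    calc (Real.sqrt (x ^ 2 - 4 * t₀ * x))⁻¹ ≤ (Real.sqrt (-(4*t₀)) * Real.sqrt x)⁻¹ := by
          apply inv_anti₀ (by positivity) h1
      _ = (Real.sqrt (-(4*t₀)))⁻¹ * (Real.sqrt x)⁻¹ := by rw [mul_inv]
  refine ⟨hint, ?_⟩
  -- The value of the integral
  have hval : (∫ x in (0 : ℝ)..c, 1 / Real.sqrt (x ^ 2 - 4 * t₀ * x)) =
      2 * Real.log (Real.sqrt (c - 4 * t₀) + Real.sqrt c) - Real.log (-(4 * t₀)) := by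
    have hcont : ContinuousOn (fun x : ℝ => 2 * Real.log (Real.sqrt (x - 4 * t₀) + Real.sqrt x))
        (Set.Icc 0 c) := by
      apply ContinuousOn.mul continuousOn_const
      apply ContinuousOn.log
      · fun_prop
      · intro x hx
        have hxa : 0 < x - 4 * t₀ := by
          have := hx.1; linarith
        have : 0 < Real.sqrt (x - 4 * t₀) := Real.sqrt_pos.mpr hxa
        have : 0 ≤ Real.sqrt x := Real.sqrt_nonneg x
        positivity
    have hderiv : ∀ x ∈ Set.Ioo (0:ℝ) c,
        HasDerivAt (fun x : ℝ => 2 * Real.log (Real.sqrt (x - 4 * t₀) + Real.sqrt x))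
          (1 / Real.sqrt (x ^ 2 - 4 * t₀ * x)) x := by
      intro x hx
      have hx0 : 0 < x := hx.1
      have hxa : 0 < x - 4 * t₀ := by linarith
      have hsx : 0 < Real.sqrt x := Real.sqrt_pos.mpr hx0
      have hsa : 0 < Real.sqrt (x - 4 * t₀) := Real.sqrt_pos.mpr hxa
      have h1 : HasDerivAt (fun y : ℝ => Real.sqrt (y - 4 * t₀))
          (1 / (2 * Real.sqrt (x - 4 * t₀))) x := by
        have := (Real.hasDerivAt_sqrt hxa.ne').comp x ((hasDerivAt_id x).sub_const (4 * t₀))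
        simpa [Function.comp_def] using this
      have h2 : HasDerivAt Real.sqrt (1 / (2 * Real.sqrt x)) x := Real.hasDerivAt_sqrt hx0.ne'
      have hpos : (0:ℝ) < Real.sqrt (x - 4 * t₀) + Real.sqrt x := by positivity
      have h3 := ((h1.add h2).log hpos.ne').const_mul (2:ℝ)
      refine h3.congr_deriv ?_
      simp only [Pi.add_apply]
      have hx2 : x ^ 2 - 4 * t₀ * x = x * (x - 4 * t₀) := by ring
      rw [hx2, Real.sqrt_mul hx0.le]
      have hux : Real.sqrt x * Real.sqrt x = x := Real.mul_self_sqrt hx0.le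
      have hva : Real.sqrt (x - 4 * t₀) * Real.sqrt (x - 4 * t₀) = x - 4 * t₀ :=
        Real.mul_self_sqrt hxa.le
      field_simp
      ring
    have := intervalIntegral.integral_eq_sub_of_hasDerivAt_of_le hc.le hcont hderiv hint
    rw [this]
    have h0 : Real.sqrt (0 - 4 * t₀) + Real.sqrt 0 = Real.sqrt (-(4 * t₀)) := by
      rw [Real.sqrt_zero]; ring_nf
    rw [h0, Real.log_sqrt ha.le]
    ring
  refine ⟨hval, ?_⟩
  -- The tube-radius consequence
  intro r hr
  rw [hval] at hr
  set u := Real.sqrt c with hu_def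
  set v := Real.sqrt (c - 4 * t₀) with hv_def
  set w := Real.sqrt (-(4 * t₀)) with hw_def
  have hu : 0 < u := Real.sqrt_pos.mpr hc
  have hv : 0 < v := Real.sqrt_pos.mpr (by linarith)
  have hw : 0 < w := Real.sqrt_pos.mpr ha
  have hu2 : u ^ 2 = c := Real.sq_sqrt hc.le
  have hv2 : v ^ 2 = c - 4 * t₀ := Real.sq_sqrt (by linarith)
  have hw2 : w ^ 2 = -(4 * t₀) := Real.sq_sqrt ha.le
  have hs : 0 < v + u := by positivity
  have hr2 : r / 2 = Real.log ((v + u) / w) := by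
    rw [Real.log_div hs.ne' hw.ne', hw_def, Real.log_sqrt ha.le, hr]
    ring
  have hsinh : Real.sinh (r / 2) = ((v + u) / w - w / (v + u)) / 2 := by
    rw [Real.sinh_eq, hr2, Real.exp_log (by positivity), ← Real.log_inv,
      Real.exp_log (by positivity), inv_div]
  rw [hsinh, ← hw2, ← hu2]
  have hvuw : v ^ 2 = u ^ 2 + w ^ 2 := by rw [hu2, hv2, hw2]; ring
  field_simp
  have h : (v + u) * (v + u) - w * w = 2 * u * (v + u) := by linear_combination hvuw
  rw [show (v + u) ^ 2 - w ^ 2 = 2 * u * (v + u) by linear_combination h]; ring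
end
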